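/- arXiv:2104.00435 — 3 statements merged into one kernel-verified Lean document; each statement's English description precedes it below -/
import Mathlib

section
/- Let X and Y be Banach spaces, 1 ≤ p < ∞, and let u : X → Y be a continuous linear operator whose adjoint u* : Y* → X* is almost p*-summing (where 1/p + 1/p* = 1). Then u takes almost unconditionally summable sequences in X into Cohen strongly p-summable sequences in Y; that is, if (x_i) ∈ Rad(X), then (u(x_i)) ∈ ℓ_p⟨Y⟩. -/
open MeasureTheory Finset Filter
open scoped ENNReal NNReal

noncomputable section

universe u v

/-- The `i`-th Rademacher function. -/
def rademacher (i : ℕ) (t : ℝ) : ℝ :=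
  if Int.fract ((2 : ℝ) ^ i * t) < 1 / 2 then 1 else -1

/-- The Rademacher (`Rad`) norm of the first `m` terms of a sequence:
`(∫_0^1 ‖∑_{i<m} r_i(t) x_i‖² dt)^{1/2}`. -/
def radNorm {Z : Type u} [NormedAddCommGroup Z] [NormedSpace ℝ Z] (m : ℕ) (x : ℕ → Z) : ℝ :=
  (∫ t in (0:ℝ)..1, ‖∑ i ∈ Finset.range m, rademacher i t • x i‖ ^ 2) ^ ((1:ℝ) / 2)

/-- Conjugate exponent in `ℝ≥0∞` (`conjExp p = p*`, `1/p + 1/p* = 1`). -/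
def conjExp (p : ℝ≥0∞) : ℝ≥0∞ := (1 - p⁻¹)⁻¹

/-- Finite strong `ℓ_q` norm `‖(x_i)_{i<m}‖_q` (sup norm if `q = ∞`). -/
def lpNormFin {Z : Type u} [NormedAddCommGroup Z] (q : ℝ≥0∞) (m : ℕ) (x : ℕ → Z) : ℝ :=
  if q = ∞ then ⨆ i : Fin m, ‖x (i : ℕ)‖
  else (∑ i ∈ Finset.range m, ‖x i‖ ^ q.toReal) ^ (1 / q.toReal)

/-- Finite weak `ℓ_q` norm `‖(x_i)_{i<m}‖_{w,q}`. -/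
def weakNorm {Z : Type u} [NormedAddCommGroup Z] [NormedSpace ℝ Z] (q : ℝ≥0∞) (m : ℕ)
    (x : ℕ → Z) : ℝ :=
  if q = ∞ then ⨆ i : Fin m, ‖x (i : ℕ)‖
  else ⨆ φ : {φ : Z →L[ℝ] ℝ // ‖φ‖ ≤ 1},
    (∑ i ∈ Finset.range m, |φ.1 (x i)| ^ q.toReal) ^ (1 / q.toReal)

/-- Membership in `Rad(Z)`: almost unconditionally summable sequences. -/
def MemRad {Z : Type u} [NormedAddCommGroup Z] [NormedSpace ℝ Z] (x : ℕ → Z) : Prop :=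
  ∃ C, ∀ m, radNorm m x ≤ C

/-- Weakly `q`-summable sequences `ℓ_q^w(Z)`. -/
def MemWeakLp {Z : Type u} [NormedAddCommGroup Z] [NormedSpace ℝ Z] (q : ℝ≥0∞)
    (x : ℕ → Z) : Prop :=
  ∃ C, ∀ m, weakNorm q m x ≤ C

/-- Absolutely `p`-summable sequences `ℓ_p(Z)` (bounded sequences if `p = ∞`). -/
def MemStrongLp {Z : Type u} [NormedAddCommGroup Z] (p : ℝ≥0∞) (x : ℕ → Z) : Prop :=
  if p = ∞ then ∃ C, ∀ i, ‖x i‖ ≤ C else Summable fun i => ‖x i‖ ^ p.toReal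

/-- Cohen strongly `p`-summable sequences `ℓ_p⟨Z⟩`. -/
def MemCohen {Z : Type u} [NormedAddCommGroup Z] [NormedSpace ℝ Z] (p : ℝ≥0∞)
    (y : ℕ → Z) : Prop :=
  ∀ φ : ℕ → (Z →L[ℝ] ℝ), MemWeakLp (conjExp p) φ → Summable fun i => |φ i (y i)|

/-- Almost `p`-summing operators. -/
def IsAlmostPSumming {Z : Type u} {W : Type v} [NormedAddCommGroup Z] [NormedSpace ℝ Z]
    [NormedAddCommGroup W] [NormedSpace ℝ W] (p : ℝ≥0∞) (u : Z →L[ℝ] W) : Prop :=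
  ∃ C, 0 ≤ C ∧ ∀ m (x : ℕ → Z), radNorm m (fun i => u (x i)) ≤ C * weakNorm p m x

/-- The almost `p`-summing norm `π_{al.s.p}(u)`. -/
def almostNorm {Z : Type u} {W : Type v} [NormedAddCommGroup Z] [NormedSpace ℝ Z]
    [NormedAddCommGroup W] [NormedSpace ℝ W] (p : ℝ≥0∞) (u : Z →L[ℝ] W) : ℝ :=
  sInf {C | 0 ≤ C ∧ ∀ m (x : ℕ → Z), radNorm m (fun i => u (x i)) ≤ C * weakNorm p m x}

/-- Absolutely `p`-summing operators (every operator is `∞`-summing by convention). -/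
def IsPSumming {Z : Type u} {W : Type v} [NormedAddCommGroup Z] [NormedSpace ℝ Z]
    [NormedAddCommGroup W] [NormedSpace ℝ W] (p : ℝ≥0∞) (u : Z →L[ℝ] W) : Prop :=
  if p = ∞ then True
  else ∀ x : ℕ → Z, MemWeakLp p x → Summable fun i => ‖u (x i)‖ ^ p.toReal

/-- Cohen strongly `q`-summing with constant `C`. -/
def IsCohenStrongWith {Z : Type u} {W : Type v} [NormedAddCommGroup Z] [NormedSpace ℝ Z]
    [NormedAddCommGroup W] [NormedSpace ℝ W] (q : ℝ≥0∞) (C : ℝ) (u : Z →L[ℝ] W) : Prop :=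
  ∀ m (x : ℕ → Z) (φ : ℕ → (W →L[ℝ] ℝ)),
    ∑ i ∈ Finset.range m, |φ i (u (x i))| ≤ C * lpNormFin q m x * weakNorm (conjExp q) m φ

/-- Cohen strongly `q`-summing operators. -/
def IsCohenStrong {Z : Type u} {W : Type v} [NormedAddCommGroup Z] [NormedSpace ℝ Z]
    [NormedAddCommGroup W] [NormedSpace ℝ W] (q : ℝ≥0∞) (u : Z →L[ℝ] W) : Prop :=
  ∃ C, 0 ≤ C ∧ IsCohenStrongWith q C u

/-- The Banach space adjoint `u* : W* → Z*`. -/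
def adj {Z : Type u} {W : Type v} [NormedAddCommGroup Z] [NormedSpace ℝ Z]
    [NormedAddCommGroup W] [NormedSpace ℝ W] (u : Z →L[ℝ] W) :
    (W →L[ℝ] ℝ) →L[ℝ] (Z →L[ℝ] ℝ) :=
  (ContinuousLinearMap.compSL Z W ℝ (RingHom.id ℝ) (RingHom.id ℝ)).flip u

/-- `Z` has type `p` with constant `C`. -/
def HasTypeWith (p : ℝ≥0∞) (C : ℝ) (Z : Type u) [NormedAddCommGroup Z] [NormedSpace ℝ Z] :
    Prop :=
  ∀ m (x : ℕ → Z), radNorm m x ≤ C * lpNormFin p m x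

/-- `Z` has type `p`. -/
def HasTypeP (p : ℝ≥0∞) (Z : Type u) [NormedAddCommGroup Z] [NormedSpace ℝ Z] : Prop :=
  ∃ C, 0 ≤ C ∧ HasTypeWith p C Z

/-- The type-`p` constant `T_p(Z)`. -/
def typeConst (p : ℝ≥0∞) (Z : Type u) [NormedAddCommGroup Z] [NormedSpace ℝ Z] : ℝ :=
  sInf {C | 0 ≤ C ∧ HasTypeWith p C Z}

/-- `Z` is an `L_p`-space with constant `lam`. -/
def IsLpSpaceWith (p : ℝ≥0∞) [Fact (1 ≤ p)] (lam : ℝ) (Z : Type u) [NormedAddCommGroup Z]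
    [NormedSpace ℝ Z] : Prop :=
  ∀ E : Submodule ℝ Z, FiniteDimensional ℝ E →
    ∃ F : Submodule ℝ Z, E ≤ F ∧ FiniteDimensional ℝ F ∧
      ∃ v : F ≃L[ℝ] PiLp p (fun _ : Fin (Module.finrank ℝ F) => ℝ),
        ‖(v : F →L[ℝ] PiLp p (fun _ : Fin (Module.finrank ℝ F) => ℝ))‖ *
          ‖(v.symm : PiLp p (fun _ : Fin (Module.finrank ℝ F) => ℝ) →L[ℝ] F)‖ ≤ lam

/-- `Z` is an `L_p`-space. -/
def IsLpSpace (p : ℝ≥0∞) [Fact (1 ≤ p)] (Z : Type u) [NormedAddCommGroup Z]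
    [NormedSpace ℝ Z] : Prop :=
  ∃ lam : ℝ, 1 < lam ∧ IsLpSpaceWith p lam Z

/-- `Z` is isomorphic to a Hilbert space. -/
def IsomorphicToHilbert (Z : Type u) [NormedAddCommGroup Z] [NormedSpace ℝ Z] : Prop :=
  ∃ ι : Type u, Nonempty (Z ≃L[ℝ] lp (fun _ : ι => ℝ) 2)

/-- `Z` is isomorphic to a closed subspace of some `L_r(μ)`. -/
def IsomorphicToClosedSubspaceLp (r : ℝ≥0∞) [Fact (1 ≤ r)] (Z : Type u)
    [NormedAddCommGroup Z] [NormedSpace ℝ Z] : Prop :=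
  ∃ (Ω : Type) (mΩ : MeasurableSpace Ω) (μ : @MeasureTheory.Measure Ω mΩ)
    (S : Submodule ℝ (@MeasureTheory.Lp Ω ℝ mΩ _ r μ)),
    IsClosed (S : Set (@MeasureTheory.Lp Ω ℝ mΩ _ r μ)) ∧ Nonempty (Z ≃L[ℝ] S)


lemma rademacher_eq_comp (i : ℕ) (t : ℝ) :
    rademacher i t = rademacher 0 ((2:ℝ) ^ i * t) := by
  simp [rademacher]

lemma rademacher_measurable (i : ℕ) : Measurable (rademacher i) := by
  unfold rademacher
  exact Measurable.ite
    (measurableSet_lt (measurable_fract.comp (measurable_const_mul _)) measurable_const)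
    measurable_const measurable_const

lemma abs_rademacher (i : ℕ) (t : ℝ) : |rademacher i t| = 1 := by
  unfold rademacher; split <;> norm_num

lemma rademacher_sq (i : ℕ) (t : ℝ) : rademacher i t * rademacher i t = 1 := by
  unfold rademacher; split <;> norm_num

lemma rademacher_zero_add_int (t : ℝ) (n : ℤ) :
    rademacher 0 (t + n) = rademacher 0 t := by
  simp [rademacher, Int.fract_add_intCast]

lemma rademacher_zero_add_half (t : ℝ) :
    rademacher 0 (t + 1/2) = - rademacher 0 t := by
  have h0 := Int.fract_nonneg t
  have h1 := Int.fract_lt_one t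
  have key : t + 1/2 = (Int.fract t + 1/2) + (⌊t⌋ : ℤ) := by
    rw [Int.fract]; ring
  rcases lt_or_ge (Int.fract t) (1/2) with h | h
  · have hf : Int.fract (t + 1/2) = Int.fract t + 1/2 := by
      rw [key, Int.fract_add_intCast, Int.fract_eq_self.mpr ⟨by linarith, by linarith⟩]
    simp only [rademacher, pow_zero, one_mul, hf]
    rw [if_neg (by linarith), if_pos h]
  · have hf : Int.fract (t + 1/2) = Int.fract t - 1/2 := by
      rw [key, Int.fract_add_intCast]
      have : Int.fract t + 1/2 = (Int.fract t - 1/2) + 1 := by ring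
      rw [this, Int.fract_add_one, Int.fract_eq_self.mpr ⟨by linarith, by linarith⟩]
    simp only [rademacher, pow_zero, one_mul, hf]
    rw [if_pos (by linarith), if_neg (not_lt.mpr h)]; norm_num

lemma rademacher_intervalIntegrable (f : ℝ → ℝ) (hm : Measurable f) {C : ℝ}
    (hb : ∀ t, |f t| ≤ C) (a b : ℝ) : IntervalIntegrable f volume a b := by
  apply (intervalIntegrable_const (c := C)).mono_fun hm.aestronglyMeasurable
  exact ae_of_all _ fun t => by
    simpa [Real.norm_eq_abs] using (hb t).trans (le_abs_self C)

lemma ortho_lt {i j : ℕ} (hij : i < j) :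
    ∫ t in (0:ℝ)..1, rademacher i t * rademacher j t = 0 := by
  set f : ℝ → ℝ := fun t => rademacher i t * rademacher j t with hf
  set s : ℝ := ((2:ℝ) ^ (i+1))⁻¹ with hs
  have hs_pos : 0 < s := by positivity
  have hanti : ∀ t, f (t + s) = - f t := by
    intro t
    have h1 : (2:ℝ) ^ i * (t + s) = (2:ℝ) ^ i * t + 1/2 := by
      rw [hs]; field_simp; ring
    have h2 : (2:ℝ) ^ j * (t + s) = (2:ℝ) ^ j * t + ((2:ℕ) ^ (j - (i+1)) : ℤ) := by
      rw [hs]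
      have hj : j = (i+1) + (j - (i+1)) := by omega
      push_cast
      rw [mul_add]
      congr 1
      rw [hj, pow_add]
      field_simp
      congr 1; omega
    have e1 : rademacher i (t + s) = - rademacher i t := by
      rw [rademacher_eq_comp, h1, rademacher_zero_add_half, ← rademacher_eq_comp]
    have e2 : rademacher j (t + s) = rademacher j t := by
      rw [rademacher_eq_comp, h2, rademacher_zero_add_int, ← rademacher_eq_comp]
    simp only [hf, e1, e2]; ring
  have hper : Function.Periodic f (2 * s) := by
    intro t
    have : t + 2 * s = (t + s) + s := by ring
    rw [this, hanti, hanti, neg_neg]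
  have hint : ∀ a b : ℝ, IntervalIntegrable f volume a b := by
    intro a b
    apply rademacher_intervalIntegrable f
      ((rademacher_measurable i).mul (rademacher_measurable j)) (C := 1) _ a b
    intro t
    rw [hf, abs_mul, abs_rademacher, abs_rademacher, mul_one]
  have hT : (0:ℝ) + ((2:ℕ)^i : ℤ) • (2 * s) = 1 := by
    rw [hs]
    push_cast
    rw [zsmul_eq_mul]
    push_cast
    rw [pow_succ]
    field_simp
    norm_num
  have h01 : ∫ t in (0:ℝ)..1, f t = ((2:ℕ)^i : ℤ) • ∫ t in (0:ℝ)..(0 + 2*s), f t := by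
    rw [← hT]
    have := hper.intervalIntegral_add_zsmul_eq (((2:ℕ)^i : ℤ)) 0 hint
    rw [this]
  have hhalf : ∫ t in (0:ℝ)..(0 + 2*s), f t = 0 := by
    rw [zero_add]
    have hsplit : ∫ t in (0:ℝ)..(2*s), f t =
        (∫ t in (0:ℝ)..s, f t) + ∫ t in s..(2*s), f t :=
      (intervalIntegral.integral_add_adjacent_intervals (hint 0 s) (hint s (2*s))).symm
    have hshift : ∫ t in s..(2*s), f t = - ∫ t in (0:ℝ)..s, f t := by
      have h2s : (2:ℝ) * s = s + s := by ring
      rw [h2s]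
      have := intervalIntegral.integral_comp_add_right (a := (0:ℝ)) (b := s) (f := f) s
      rw [zero_add] at this
      rw [← this]
      rw [intervalIntegral.integral_congr (g := fun t => - f t) (fun t _ => hanti t)]
      rw [intervalIntegral.integral_neg]
    rw [hsplit, hshift]; ring
  rw [hf] at h01 ⊢
  rw [h01, hhalf, smul_zero]

lemma ortho {i j : ℕ} (hij : i ≠ j) :
    ∫ t in (0:ℝ)..1, rademacher i t * rademacher j t = 0 := by
  rcases hij.lt_or_gt with h | h
  · exact ortho_lt h
  · rw [intervalIntegral.integral_congr
      (g := fun t => rademacher j t * rademacher i t) (fun t _ => mul_comm _ _)]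
    exact ortho_lt h

lemma rademacher_self_integral (i : ℕ) :
    ∫ t in (0:ℝ)..1, rademacher i t * rademacher i t = 1 := by
  rw [intervalIntegral.integral_congr (g := fun _ => (1:ℝ))
    (fun t _ => rademacher_sq i t)]
  simp


lemma radNorm_nonneg {Z : Type u} [NormedAddCommGroup Z] [NormedSpace ℝ Z] (m : ℕ)
    (x : ℕ → Z) : 0 ≤ radNorm m x := by
  apply Real.rpow_nonneg
  apply intervalIntegral.integral_nonneg zero_le_one
  intro t _
  positivity

set_option maxHeartbeats 1000000 in
lemma sum_dual_apply_le {X : Type u} [NormedAddCommGroup X] [NormedSpace ℝ X] (m : ℕ)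
    (ψ : ℕ → (X →L[ℝ] ℝ)) (x : ℕ → X) :
    ∑ i ∈ Finset.range m, ψ i (x i) ≤ radNorm m ψ * radNorm m x := by
  set F : ℝ → (X →L[ℝ] ℝ) := fun t => ∑ i ∈ Finset.range m, rademacher i t • ψ i with hF
  set G : ℝ → X := fun t => ∑ j ∈ Finset.range m, rademacher j t • x j with hG
  set Cψ : ℝ := ∑ i ∈ Finset.range m, ‖ψ i‖ with hCψ
  set Cx : ℝ := ∑ i ∈ Finset.range m, ‖x i‖ with hCx
  have hFnorm : ∀ t, ‖F t‖ ≤ Cψ := by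
    intro t
    refine (norm_sum_le _ _).trans (Finset.sum_le_sum fun i _ => ?_)
    refine (norm_smul_le (rademacher i t) (ψ i)).trans ?_
    rw [Real.norm_eq_abs, abs_rademacher, one_mul]
  have hGnorm : ∀ t, ‖G t‖ ≤ Cx := by
    intro t
    refine (norm_sum_le _ _).trans (Finset.sum_le_sum fun i _ => ?_)
    refine (norm_smul_le (rademacher i t) (x i)).trans ?_
    rw [Real.norm_eq_abs, abs_rademacher, one_mul]
  have hCψ0 : 0 ≤ Cψ := Finset.sum_nonneg fun i _ => norm_nonneg _
  have hCx0 : 0 ≤ Cx := Finset.sum_nonneg fun i _ => norm_nonneg _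
  have hFmeas : StronglyMeasurable F :=
    Finset.stronglyMeasurable_fun_sum _ fun i _ =>
      ((rademacher_measurable i).stronglyMeasurable).smul_const (ψ i)
  have hGmeas : StronglyMeasurable G :=
    Finset.stronglyMeasurable_fun_sum _ fun i _ =>
      ((rademacher_measurable i).stronglyMeasurable).smul_const (x i)
  -- pointwise expansion
  have hexp : ∀ t, F t (G t) = ∑ i ∈ Finset.range m, ∑ j ∈ Finset.range m,
      (rademacher i t * rademacher j t) * (ψ i) (x j) := by
    intro t
    simp only [hF, hG, ContinuousLinearMap.coe_sum', Finset.sum_apply,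
      ContinuousLinearMap.coe_smul', Pi.smul_apply, map_sum, _root_.map_smul, smul_eq_mul,
      Finset.mul_sum]
    rw [Finset.sum_comm]
    exact Finset.sum_congr rfl fun i _ => Finset.sum_congr rfl fun j _ => by ring
  -- integrability of each term
  have hterm : ∀ i j : ℕ, IntervalIntegrable
      (fun t => (rademacher i t * rademacher j t) * (ψ i) (x j)) volume 0 1 := by
    intro i j
    apply rademacher_intervalIntegrable _
      (((rademacher_measurable i).mul (rademacher_measurable j)).mul_const _)
      (C := |(ψ i) (x j)|)
    intro t
    simp only [Pi.mul_apply]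
    rw [abs_mul, abs_mul, abs_rademacher, abs_rademacher, one_mul, one_mul]
  -- step 1 : the sum equals the integral of F(G)
  have hstep1 : ∑ i ∈ Finset.range m, ψ i (x i) = ∫ t in (0:ℝ)..1, F t (G t) := by
    rw [intervalIntegral.integral_congr (g := fun t => ∑ i ∈ Finset.range m,
      ∑ j ∈ Finset.range m, (rademacher i t * rademacher j t) * (ψ i) (x j))
      (fun t _ => hexp t)]
    have hin : ∀ i ∈ Finset.range m, IntervalIntegrable
        (fun t => ∑ j ∈ Finset.range m, (rademacher i t * rademacher j t) * (ψ i) (x j))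
        volume 0 1 := by
      intro i _
      have h2 := IntervalIntegrable.sum (Finset.range m)
        (f := fun j t => (rademacher i t * rademacher j t) * (ψ i) (x j))
        (fun j _ => hterm i j)
      have he : (∑ j ∈ Finset.range m, fun t => (rademacher i t * rademacher j t) * (ψ i) (x j))
          = fun t => ∑ j ∈ Finset.range m, (rademacher i t * rademacher j t) * (ψ i) (x j) := by
        funext t; simp
      rwa [he] at h2
    rw [intervalIntegral.integral_finset_sum hin]
    have key : ∀ i ∈ Finset.range m,
        (∫ t in (0:ℝ)..1, ∑ j ∈ Finset.range m,
          (rademacher i t * rademacher j t) * (ψ i) (x j)) = ψ i (x i) := by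
      intro i hi
      rw [intervalIntegral.integral_finset_sum (fun j _ => hterm i j)]
      have hone : ∀ j ∈ Finset.range m,
          (∫ t in (0:ℝ)..1, (rademacher i t * rademacher j t) * (ψ i) (x j)) =
          (if i = j then (1:ℝ) else 0) * (ψ i) (x j) := by
        intro j _
        rw [intervalIntegral.integral_mul_const]
        by_cases h : i = j
        · subst h; rw [rademacher_self_integral, if_pos rfl]
        · rw [ortho h, if_neg h]
      rw [Finset.sum_congr rfl hone]
      simp only [ite_mul, one_mul, zero_mul, Finset.sum_ite_eq, Finset.mem_range]
      rw [if_pos (Finset.mem_range.mp hi)]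
    rw [Finset.sum_congr rfl key]
  -- integrability of F(G) and of ‖F‖*‖G‖
  have hFG : IntervalIntegrable (fun t => F t (G t)) volume 0 1 := by
    have hmeq : (fun t => F t (G t)) = fun t => ∑ i ∈ Finset.range m,
        ∑ j ∈ Finset.range m, (rademacher i t * rademacher j t) * (ψ i) (x j) :=
      funext hexp
    have hm : Measurable fun t => F t (G t) := by
      rw [hmeq]
      exact Finset.measurable_sum _ fun i _ => Finset.measurable_sum _ fun j _ =>
        (((rademacher_measurable i).mul (rademacher_measurable j)).mul_const _)
    apply rademacher_intervalIntegrable _ hm (C := Cψ * Cx)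
    intro t
    refine ((F t).le_opNorm (G t)).trans ?_
    exact mul_le_mul (hFnorm t) (hGnorm t) (norm_nonneg _) hCψ0
  have hNN : IntervalIntegrable (fun t => ‖F t‖ * ‖G t‖) volume 0 1 := by
    apply rademacher_intervalIntegrable _ (hFmeas.norm.measurable.mul hGmeas.norm.measurable)
      (C := Cψ * Cx)
    intro t
    simp only [Pi.mul_apply]
    rw [abs_of_nonneg (mul_nonneg (norm_nonneg _) (norm_nonneg _))]
    exact mul_le_mul (hFnorm t) (hGnorm t) (norm_nonneg _) hCψ0
  -- step 2
  have hstep2 : (∫ t in (0:ℝ)..1, F t (G t)) ≤ ∫ t in (0:ℝ)..1, ‖F t‖ * ‖G t‖ := by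
    apply intervalIntegral.integral_mono_on zero_le_one hFG hNN
    intro t _
    exact (le_abs_self _).trans ((F t).le_opNorm (G t))
  -- step 3 : Cauchy-Schwarz
  have hstep3 : (∫ t in (0:ℝ)..1, ‖F t‖ * ‖G t‖) ≤ radNorm m ψ * radNorm m x := by
    set μ : Measure ℝ := volume.restrict (Set.Ioc (0:ℝ) 1) with hμ
    haveI : IsFiniteMeasure μ := ⟨by
      rw [hμ, Measure.restrict_apply_univ, Real.volume_Ioc]
      norm_num⟩
    have hpq : Real.HolderConjugate 2 2 := Real.holderConjugate_iff.mpr ⟨by norm_num, by norm_num⟩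
    have hFL : MemLp (fun t => ‖F t‖) (ENNReal.ofReal 2) μ :=
      (memLp_top_of_bound hFmeas.norm.aestronglyMeasurable Cψ
        (ae_of_all _ fun t => by
          rw [Real.norm_eq_abs, abs_of_nonneg (norm_nonneg _)]
          exact hFnorm t)).mono_exponent le_top
    have hGL : MemLp (fun t => ‖G t‖) (ENNReal.ofReal 2) μ :=
      (memLp_top_of_bound hGmeas.norm.aestronglyMeasurable Cx
        (ae_of_all _ fun t => by
          rw [Real.norm_eq_abs, abs_of_nonneg (norm_nonneg _)]
          exact hGnorm t)).mono_exponent le_top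
    have H := integral_mul_le_Lp_mul_Lq_of_nonneg hpq
      (ae_of_all μ fun t => norm_nonneg (F t)) (ae_of_all μ fun t => norm_nonneg (G t))
      hFL hGL
    have hrw : ∀ (y : ℝ), y ^ (2:ℝ) = y ^ (2:ℕ) := fun y => by
      rw [← Real.rpow_natCast y 2]; norm_num
    simp only [hrw] at H
    rw [intervalIntegral.integral_of_le zero_le_one]
    unfold radNorm
    rw [intervalIntegral.integral_of_le zero_le_one,
      intervalIntegral.integral_of_le zero_le_one]
    simp only [hF, hG] at H
    convert H using 3 <;> norm_num
  calc ∑ i ∈ Finset.range m, ψ i (x i) = ∫ t in (0:ℝ)..1, F t (G t) := hstep1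
    _ ≤ ∫ t in (0:ℝ)..1, ‖F t‖ * ‖G t‖ := hstep2
    _ ≤ radNorm m ψ * radNorm m x := hstep3


lemma weakNorm_nonneg {Z : Type u} [NormedAddCommGroup Z] [NormedSpace ℝ Z] (q : ℝ≥0∞)
    (m : ℕ) (z : ℕ → Z) : 0 ≤ weakNorm q m z := by
  unfold weakNorm
  split
  · exact Real.iSup_nonneg fun i => norm_nonneg _
  · exact Real.iSup_nonneg fun Φ => Real.rpow_nonneg
      (Finset.sum_nonneg fun i _ => Real.rpow_nonneg (abs_nonneg _) _) _

lemma weakNorm_smul_sign {Z : Type u} [NormedAddCommGroup Z] [NormedSpace ℝ Z] (q : ℝ≥0∞)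
    (m : ℕ) (z : ℕ → Z) (ε : ℕ → ℝ) (hε : ∀ i, |ε i| = 1) :
    weakNorm q m (fun i => ε i • z i) = weakNorm q m z := by
  unfold weakNorm
  split
  · exact iSup_congr fun i => by rw [norm_smul, Real.norm_eq_abs, hε, one_mul]
  · refine iSup_congr fun Φ => ?_
    congr 1
    refine Finset.sum_congr rfl fun i _ => ?_
    rw [_root_.map_smul, smul_eq_mul, abs_mul, hε, one_mul]

/-- If `u* ` is almost `p*`-summing for some `1 ≤ p < ∞`, then `u` maps
almost unconditionally summable sequences into Cohen strongly `p`-summable sequences. -/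
theorem stmt0 {X : Type u} {Y : Type v} [NormedAddCommGroup X] [NormedSpace ℝ X]
    [CompleteSpace X] [NormedAddCommGroup Y] [NormedSpace ℝ Y] [CompleteSpace Y]
    (p : ℝ≥0∞) (hp1 : 1 ≤ p) (hp2 : p ≠ ∞) (u : X →L[ℝ] Y)
    (hu : IsAlmostPSumming (conjExp p) (adj u)) :
    ∀ x : ℕ → X, MemRad x → MemCohen p (fun i => u (x i)) := by
  intro x hx φ hφ
  obtain ⟨Cx, hCx⟩ := hx
  obtain ⟨C, hC0, hC⟩ := hu
  obtain ⟨Cφ, hCφ⟩ := hφ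
  have hCx0 : 0 ≤ Cx := le_trans (radNorm_nonneg 0 x) (hCx 0)
  have hCφ0 : 0 ≤ Cφ := le_trans (weakNorm_nonneg _ 0 φ) (hCφ 0)
  set ε : ℕ → ℝ := fun i => if 0 ≤ φ i (u (x i)) then (1:ℝ) else -1 with hε
  have habs : ∀ i, |ε i| = 1 := by
    intro i; rw [hε]; dsimp only; split <;> norm_num
  have hval : ∀ i, (adj u (ε i • φ i)) (x i) = |φ i (u (x i))| := by
    intro i
    have h1 : (adj u (ε i • φ i)) (x i) = ε i * φ i (u (x i)) := rfl
    rw [h1, hε]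
    dsimp only
    rcases le_or_gt 0 (φ i (u (x i))) with h | h
    · rw [if_pos h, one_mul, abs_of_nonneg h]
    · rw [if_neg (not_le.mpr h), abs_of_neg h]; ring
  apply summable_of_sum_range_le (c := C * Cφ * Cx) (fun n => abs_nonneg _)
  intro m
  have h1 : ∑ i ∈ Finset.range m, |φ i (u (x i))| =
      ∑ i ∈ Finset.range m, (adj u (ε i • φ i)) (x i) :=
    (Finset.sum_congr rfl fun i _ => (hval i).symm)
  have h2 := sum_dual_apply_le m (fun i => adj u (ε i • φ i)) x
  have h3 : radNorm m (fun i => adj u (ε i • φ i)) ≤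
      C * weakNorm (conjExp p) m (fun i => ε i • φ i) := hC m (fun i => ε i • φ i)
  rw [weakNorm_smul_sign _ _ _ _ habs] at h3
  have h4 : radNorm m (fun i => adj u (ε i • φ i)) * radNorm m x ≤
      (C * weakNorm (conjExp p) m φ) * Cx :=
    mul_le_mul h3 (hCx m) (radNorm_nonneg _ _)
      (mul_nonneg hC0 (weakNorm_nonneg _ _ _))
  have h5 : C * weakNorm (conjExp p) m φ * Cx ≤ C * Cφ * Cx :=
    mul_le_mul_of_nonneg_right (mul_le_mul_of_nonneg_left (hCφ m) hC0) hCx0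
  calc ∑ i ∈ Finset.range m, |φ i (u (x i))|
      = ∑ i ∈ Finset.range m, (adj u (ε i • φ i)) (x i) := h1
    _ ≤ radNorm m (fun i => adj u (ε i • φ i)) * radNorm m x := h2
    _ ≤ C * weakNorm (conjExp p) m φ * Cx := h4
    _ ≤ C * Cφ * Cx := h5

end
end

section
/- Let X and Y be Banach spaces such that X has type p, with 1 ≤ p ≤ 2, and let u : X → Y be a continuous linear operator. If u takes almost unconditionally summable sequences in X into members of ℓ_p⟨Y⟩, then the adjoint u* is absolutely p*-summing (equivalently, u is Cohen strongly p-summing). -/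
open MeasureTheory Finset Filter
open scoped ENNReal NNReal

noncomputable section

universe u v

section Helpers
set_option linter.unusedSectionVars false

variable {Z : Type u} [NormedAddCommGroup Z] [NormedSpace ℝ Z]

lemma lpNormFin_nonneg (q : ℝ≥0∞) (m : ℕ) (x : ℕ → Z) : 0 ≤ lpNormFin q m x := by
  unfold lpNormFin
  split
  · exact Real.iSup_nonneg fun i => norm_nonneg _
  · exact Real.rpow_nonneg (Finset.sum_nonneg fun i _ => Real.rpow_nonneg (norm_nonneg _) _) _

lemma weakNorm_nonneg_s3 (q : ℝ≥0∞) (m : ℕ) (x : ℕ → Z) : 0 ≤ weakNorm q m x := by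
  unfold weakNorm
  split
  · exact Real.iSup_nonneg fun i => norm_nonneg _
  · exact Real.iSup_nonneg fun φ => Real.rpow_nonneg
      (Finset.sum_nonneg fun i _ => Real.rpow_nonneg (abs_nonneg _) _) _

lemma weakNorm_bddAbove (q : ℝ≥0∞) (m : ℕ) (x : ℕ → Z) :
    BddAbove (Set.range fun φ : {φ : Z →L[ℝ] ℝ // ‖φ‖ ≤ 1} =>
      (∑ i ∈ Finset.range m, |φ.1 (x i)| ^ q.toReal) ^ (1 / q.toReal)) := by
  refine ⟨(∑ i ∈ Finset.range m, ‖x i‖ ^ q.toReal) ^ (1 / q.toReal), ?_⟩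
  rintro - ⟨φ, rfl⟩
  refine Real.rpow_le_rpow (Finset.sum_nonneg fun i _ => Real.rpow_nonneg (abs_nonneg _) _)
    (Finset.sum_le_sum fun i _ => Real.rpow_le_rpow (abs_nonneg _) ?_ ENNReal.toReal_nonneg)
    (by positivity)
  rw [← Real.norm_eq_abs]
  calc ‖φ.1 (x i)‖ ≤ ‖φ.1‖ * ‖x i‖ := (φ.1).le_opNorm _
    _ ≤ 1 * ‖x i‖ := by
        have := norm_nonneg (x i); nlinarith [φ.2]
    _ = ‖x i‖ := one_mul _

lemma le_weakNorm (q : ℝ≥0∞) (hq : q ≠ ∞) (m : ℕ) (x : ℕ → Z)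
    (φ : {φ : Z →L[ℝ] ℝ // ‖φ‖ ≤ 1}) :
    (∑ i ∈ Finset.range m, |φ.1 (x i)| ^ q.toReal) ^ (1 / q.toReal) ≤ weakNorm q m x := by
  unfold weakNorm
  rw [if_neg hq]
  exact le_ciSup (weakNorm_bddAbove q m x) φ

lemma abs_apply_le_weakNorm (q : ℝ≥0∞) (hq0 : q = ∞ ∨ 0 < q.toReal) (m : ℕ)
    (φ : ℕ → (Z →L[ℝ] ℝ)) {i : ℕ} (hi : i < m) (y : Z) :
    |φ i y| ≤ ‖y‖ * weakNorm q m φ := by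
  rcases eq_or_ne q ∞ with hq | hq
  · subst hq
    unfold weakNorm
    rw [if_pos rfl]
    calc |φ i y| = ‖φ i y‖ := (Real.norm_eq_abs _).symm
      _ ≤ ‖φ i‖ * ‖y‖ := (φ i).le_opNorm _
      _ ≤ (⨆ j : Fin m, ‖φ (j : ℕ)‖) * ‖y‖ :=
          mul_le_mul_of_nonneg_right
            (le_ciSup (f := fun j : Fin m => ‖φ (j : ℕ)‖)
              (Set.Finite.bddAbove (Set.finite_range _)) (⟨i, hi⟩ : Fin m)) (norm_nonneg y)
      _ = ‖y‖ * ⨆ j : Fin m, ‖φ (j : ℕ)‖ := mul_comm _ _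
  · have hr : 0 < q.toReal := hq0.resolve_left hq
    rcases eq_or_ne y 0 with rfl | hy
    · simp only [map_zero, abs_zero, norm_zero, zero_mul, le_refl]
    have hny : (0:ℝ) < ‖y‖ := norm_pos_iff.mpr hy
    have hmem : ‖(‖y‖⁻¹ • NormedSpace.inclusionInDoubleDual ℝ Z y :
        (Z →L[ℝ] ℝ) →L[ℝ] ℝ)‖ ≤ 1 := by
      refine (ContinuousLinearMap.opNorm_smul_le (‖y‖⁻¹ : ℝ) (NormedSpace.inclusionInDoubleDual ℝ Z y :
        (Z →L[ℝ] ℝ) →L[ℝ] ℝ)).trans ?_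
      have h1 := NormedSpace.double_dual_bound ℝ Z y
      rw [Real.norm_eq_abs, abs_inv, abs_of_nonneg (norm_nonneg y)]
      calc ‖y‖⁻¹ * ‖NormedSpace.inclusionInDoubleDual ℝ Z y‖ ≤ ‖y‖⁻¹ * ‖y‖ := by gcongr
        _ = 1 := inv_mul_cancel₀ hny.ne'
    set Φ : {Ψ : (Z →L[ℝ] ℝ) →L[ℝ] ℝ // ‖Ψ‖ ≤ 1} :=
      ⟨(‖y‖⁻¹ • NormedSpace.inclusionInDoubleDual ℝ Z y : (Z →L[ℝ] ℝ) →L[ℝ] ℝ), hmem⟩ with hΦ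
    have happ : ∀ z : Z →L[ℝ] ℝ, Φ.1 z = ‖y‖⁻¹ * z y := by
      intro z
      simp [hΦ]
    have h1 : |Φ.1 (φ i)| ≤ (∑ j ∈ Finset.range m, |Φ.1 (φ j)| ^ q.toReal) ^ (1 / q.toReal) := by
      have hle : |Φ.1 (φ i)| ^ q.toReal ≤ ∑ j ∈ Finset.range m, |Φ.1 (φ j)| ^ q.toReal :=
        Finset.single_le_sum (f := fun j => |Φ.1 (φ j)| ^ q.toReal)
          (fun j _ => Real.rpow_nonneg (abs_nonneg _) _) (Finset.mem_range.mpr hi)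
      calc |Φ.1 (φ i)| = (|Φ.1 (φ i)| ^ q.toReal) ^ (1 / q.toReal) := by
            rw [← Real.rpow_mul (abs_nonneg _), mul_one_div, div_self hr.ne', Real.rpow_one]
        _ ≤ (∑ j ∈ Finset.range m, |Φ.1 (φ j)| ^ q.toReal) ^ (1 / q.toReal) :=
            Real.rpow_le_rpow (Real.rpow_nonneg (abs_nonneg _) _) hle (by positivity)
    have h2 := le_weakNorm q hq m φ Φ
    have h3 : |Φ.1 (φ i)| = ‖y‖⁻¹ * |φ i y| := by
      rw [happ, abs_mul, abs_inv, abs_of_nonneg (norm_nonneg y)]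
    have h4 := h1.trans h2
    rw [h3] at h4
    calc |φ i y| = ‖y‖ * (‖y‖⁻¹ * |φ i y|) := by field_simp
      _ ≤ ‖y‖ * weakNorm q m φ := by gcongr

lemma lpNormFin_smul (q : ℝ≥0∞) (hq : q ≠ ∞) (hr : 0 < q.toReal) (m : ℕ) (x : ℕ → Z)
    {c : ℝ} (hc : 0 ≤ c) :
    lpNormFin q m (fun i => c • x i) = c * lpNormFin q m x := by
  unfold lpNormFin
  rw [if_neg hq, if_neg hq]
  have : ∀ i, ‖c • x i‖ ^ q.toReal = c ^ q.toReal * ‖x i‖ ^ q.toReal := by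
    intro i
    rw [norm_smul, Real.norm_eq_abs, abs_of_nonneg hc, Real.mul_rpow hc (norm_nonneg _)]
  simp only [this, ← Finset.mul_sum]
  rw [Real.mul_rpow (Real.rpow_nonneg hc _) (Finset.sum_nonneg fun i _ =>
    Real.rpow_nonneg (norm_nonneg _) _), ← Real.rpow_mul hc, mul_one_div,
    div_self hr.ne', Real.rpow_one]

lemma weakNorm_smul_le (q : ℝ≥0∞) (hr : q ≠ ∞ → 0 < q.toReal) (m : ℕ) (x : ℕ → Z)
    {c : ℝ} (hc : 0 ≤ c) :
    weakNorm q m (fun i => c • x i) ≤ c * weakNorm q m x := by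
  rcases eq_or_ne q ∞ with rfl | hq
  · have lhs_eq : weakNorm ∞ m (fun i => c • x i) = ⨆ i : Fin m, ‖c • x (i : ℕ)‖ := by
      rw [weakNorm, if_pos rfl]
    have rhs_eq : weakNorm ∞ m x = ⨆ i : Fin m, ‖x (i : ℕ)‖ := by
      rw [weakNorm, if_pos rfl]
    rw [lhs_eq, rhs_eq]
    refine Real.iSup_le (fun i => ?_)
      (mul_nonneg hc (Real.iSup_nonneg fun i => norm_nonneg _))
    rw [norm_smul, Real.norm_eq_abs, abs_of_nonneg hc]
    exact mul_le_mul_of_nonneg_left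
      (le_ciSup (f := fun j : Fin m => ‖x (j : ℕ)‖)
        (Set.Finite.bddAbove (Set.finite_range _)) i) hc
  · have hr' := hr hq
    have lhs_eq : weakNorm q m (fun i => c • x i) = ⨆ φ : {φ : Z →L[ℝ] ℝ // ‖φ‖ ≤ 1},
        (∑ i ∈ Finset.range m, |φ.1 (c • x i)| ^ q.toReal) ^ (1 / q.toReal) := by
      rw [weakNorm, if_neg hq]
    rw [lhs_eq]
    refine Real.iSup_le (fun φ => ?_) (mul_nonneg hc (weakNorm_nonneg_s3 q m x))
    have heq : ∀ i, |φ.1 (c • x i)| ^ q.toReal = c ^ q.toReal * |φ.1 (x i)| ^ q.toReal := by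
      intro i
      rw [ContinuousLinearMap.map_smul, smul_eq_mul, abs_mul, abs_of_nonneg hc,
        Real.mul_rpow hc (abs_nonneg _)]
    simp only [heq, ← Finset.mul_sum]
    rw [Real.mul_rpow (Real.rpow_nonneg hc _) (Finset.sum_nonneg fun i _ =>
      Real.rpow_nonneg (abs_nonneg _) _), ← Real.rpow_mul hc, mul_one_div,
      div_self hr'.ne', Real.rpow_one]
    exact mul_le_mul_of_nonneg_left (le_weakNorm q hq m x φ) hc

/-- Split an index `k` into a block index and an offset, for blocks of sizes `m n + 1`. -/
def blockSplit (m : ℕ → ℕ) (k : ℕ) : ℕ × ℕ :=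
  if k < m 0 + 1 then (0, k)
  else
    let p := blockSplit (fun n => m (n + 1)) (k - (m 0 + 1))
    (p.1 + 1, p.2)
termination_by k
decreasing_by
  rename_i h
  push_neg at h
  omega

/-- Offsets for blocks of sizes `m n + 1`. -/
def blockOffset (m : ℕ → ℕ) (N : ℕ) : ℕ := ∑ n ∈ Finset.range N, (m n + 1)

lemma le_blockOffset (m : ℕ → ℕ) (N : ℕ) : N ≤ blockOffset m N := by
  unfold blockOffset
  calc N = ∑ n ∈ Finset.range N, 1 := by simp
    _ ≤ ∑ n ∈ Finset.range N, (m n + 1) := Finset.sum_le_sum fun n _ => by omega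

lemma blockSplit_lt (m : ℕ → ℕ) (k : ℕ) :
    (blockSplit m k).2 < m (blockSplit m k).1 + 1 := by
  induction k using Nat.strong_induction_on generalizing m with
  | _ k ih =>
    rw [blockSplit]
    split
    · simpa using ‹k < m 0 + 1›
    · rename_i h
      push_neg at h
      exact ih (k - (m 0 + 1)) (by omega) (fun n => m (n + 1))

lemma blockSplit_of_lt (m : ℕ → ℕ) {k : ℕ} (h : k < m 0 + 1) : blockSplit m k = (0, k) := by
  rw [blockSplit, if_pos h]

lemma blockSplit_shift (m : ℕ → ℕ) (k : ℕ) :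
    blockSplit m (m 0 + 1 + k) =
      ((blockSplit (fun n => m (n + 1)) k).1 + 1, (blockSplit (fun n => m (n + 1)) k).2) := by
  rw [blockSplit, if_neg (by omega)]
  simp [Nat.add_sub_cancel_left, Nat.add_comm (m 0 + 1) k]

lemma sum_blockSplit (g : ℕ × ℕ → ℝ) (m : ℕ → ℕ) (N : ℕ) :
    ∑ k ∈ Finset.range (blockOffset m N), g (blockSplit m k) =
      ∑ n ∈ Finset.range N, ∑ i ∈ Finset.range (m n + 1), g (n, i) := by
  induction N generalizing m g with
  | zero => simp [blockOffset]
  | succ N ih =>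
    have hoff : blockOffset m (N + 1) = (m 0 + 1) + blockOffset (fun n => m (n + 1)) N := by
      unfold blockOffset
      rw [Finset.sum_range_succ' (fun n => m n + 1) N]
      ring
    rw [hoff, Finset.sum_range_add]
    have h1 : ∑ k ∈ Finset.range (m 0 + 1), g (blockSplit m k) =
        ∑ i ∈ Finset.range (m 0 + 1), g (0, i) :=
      Finset.sum_congr rfl fun k hk => by
        rw [blockSplit_of_lt m (Finset.mem_range.mp hk)]
    have h2 : ∑ k ∈ Finset.range (blockOffset (fun n => m (n + 1)) N),
        g (blockSplit m (m 0 + 1 + k)) =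
        ∑ n ∈ Finset.range N, ∑ i ∈ Finset.range (m (n + 1) + 1), g (n + 1, i) := by
      rw [Finset.sum_congr rfl fun k _ => by rw [blockSplit_shift]]
      exact ih (fun p => g (p.1 + 1, p.2)) (fun n => m (n + 1))
    rw [h1, h2, Finset.sum_range_succ' (fun n => ∑ i ∈ Finset.range (m n + 1), g (n, i)) N]
    ring

lemma sum_prefix_le_blocks {g : ℕ × ℕ → ℝ} (hg : ∀ p, 0 ≤ g p) (m : ℕ → ℕ) (K : ℕ) :
    ∑ k ∈ Finset.range K, g (blockSplit m k) ≤
      ∑ n ∈ Finset.range K, ∑ i ∈ Finset.range (m n + 1), g (n, i) := by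
  rw [← sum_blockSplit g m K]
  exact Finset.sum_le_sum_of_subset_of_nonneg
    (Finset.range_subset_range.mpr (le_blockOffset m K)) (fun k _ _ => hg _)

lemma rpow_le_of_rpow_inv_le {r S a : ℝ} (hr : 0 < r) (hS : 0 ≤ S) (h : S ^ (1/r) ≤ a) :
    S ≤ a ^ r := by
  have h2 := Real.rpow_le_rpow (Real.rpow_nonneg hS _) h hr.le
  rwa [← Real.rpow_mul hS, one_div, inv_mul_cancel₀ hr.ne', Real.rpow_one] at h2

lemma conjExp_one : conjExp 1 = ∞ := by
  simp [conjExp]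

lemma conjExp_facts {p : ℝ≥0∞} (h1 : 1 < p) (h2 : p ≠ ∞) :
    conjExp p ≠ ∞ ∧ 1 < (conjExp p).toReal ∧
      1 / p.toReal + 1 / (conjExp p).toReal = 1 := by
  have hr1 : 1 < p.toReal := by
    rw [← ENNReal.toReal_one]
    exact (ENNReal.toReal_lt_toReal (by simp) h2).mpr h1
  have hr0 : 0 < p.toReal := lt_trans one_pos hr1
  have hinv_lt : p⁻¹ < 1 := ENNReal.inv_lt_one.mpr h1
  have hsub_pos : (0 : ℝ≥0∞) < 1 - p⁻¹ := tsub_pos_iff_lt.mpr hinv_lt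
  have hne : conjExp p ≠ ∞ := by
    rw [conjExp]
    exact ENNReal.inv_ne_top.mpr hsub_pos.ne'
  have htoReal : (conjExp p).toReal = (1 - p.toReal⁻¹)⁻¹ := by
    rw [conjExp, ENNReal.toReal_inv]
    congr 1
    rw [ENNReal.toReal_sub_of_le hinv_lt.le (by simp), ENNReal.toReal_one,
      ENNReal.toReal_inv]
  have hrinv : p.toReal⁻¹ < 1 := by
    rw [inv_lt_one_iff₀]; right; exact hr1
  have hsub : (0:ℝ) < 1 - p.toReal⁻¹ := by linarith
  refine ⟨hne, ?_, ?_⟩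
  · rw [htoReal]
    have : 1 - p.toReal⁻¹ < 1 := by
      have : 0 < p.toReal⁻¹ := inv_pos.mpr hr0
      linarith
    exact (one_lt_inv₀ hsub).mpr this
  · rw [htoReal, one_div, one_div, inv_inv]
    have hp0 : p.toReal ≠ 0 := hr0.ne'
    field_simp
    ring

end Helpers

set_option maxHeartbeats 1000000 in
/-- If `X` has type `p` (`1 ≤ p ≤ 2`) and `u` maps almost unconditionally
summable sequences into `ℓ_p⟨Y⟩`, then `u*` is `p*`-summing (equivalently, `u` is Cohen
strongly `p`-summing). -/
theorem stmt3 {X : Type u} {Y : Type v} [NormedAddCommGroup X] [NormedSpace ℝ X]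
    [CompleteSpace X] [NormedAddCommGroup Y] [NormedSpace ℝ Y] [CompleteSpace Y]
    (p : ℝ≥0∞) (hp1 : 1 ≤ p) (hp2 : p ≤ 2) (hX : HasTypeP p X) (u : X →L[ℝ] Y)
    (hu : ∀ x : ℕ → X, MemRad x → MemCohen p (fun i => u (x i))) :
    IsPSumming (conjExp p) (adj u) ∧ IsCohenStrong p u := by
  have hp_ne_top : p ≠ ∞ := ne_top_of_le_ne_top (by simp) hp2
  set r := p.toReal with hr_def
  have hr1 : 1 ≤ r := by
    rw [hr_def, ← ENNReal.toReal_one]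
    exact ENNReal.toReal_mono hp_ne_top hp1
  have hr0 : 0 < r := lt_of_lt_of_le one_pos hr1
  have hq0 : conjExp p = ∞ ∨ 0 < (conjExp p).toReal := by
    rcases eq_or_ne p 1 with rfl | hp1'
    · exact Or.inl conjExp_one
    · exact Or.inr (lt_trans one_pos
        (conjExp_facts (lt_of_le_of_ne hp1 (Ne.symm hp1')) hp_ne_top).2.1)
  have hqr : conjExp p ≠ ∞ → 0 < (conjExp p).toReal := fun h => hq0.resolve_left h
  have hq1 : conjExp p ≠ ∞ → 1 < (conjExp p).toReal := by
    intro h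
    rcases eq_or_ne p 1 with rfl | hp1'
    · exact absurd conjExp_one h
    · exact (conjExp_facts (lt_of_le_of_ne hp1 (Ne.symm hp1')) hp_ne_top).2.1
  -- Part A : u is Cohen strongly p-summing
  have cohen : IsCohenStrong p u := by
    by_contra hcon
    rw [IsCohenStrong] at hcon
    push_neg at hcon
    have blocks : ∀ n : ℕ, ∃ (M : ℕ) (xx : ℕ → X) (φφ : ℕ → (Y →L[ℝ] ℝ)),
        lpNormFin p M xx ≤ (1/2 : ℝ)^n ∧ weakNorm (conjExp p) M φφ ≤ (1/2 : ℝ)^n ∧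
        1 < ∑ i ∈ Finset.range M, |φφ i (u (xx i))| := by
      intro n
      have h4 : (0:ℝ) ≤ 4 ^ n := by positivity
      have hC := hcon ((4:ℝ)^n) h4
      rw [IsCohenStrongWith] at hC
      push_neg at hC
      obtain ⟨M, x0, φ0, hlt⟩ := hC
      set L := lpNormFin p M x0 with hL_def
      set W := weakNorm (conjExp p) M φ0 with hW_def
      have hL0 : 0 ≤ L := lpNormFin_nonneg p M x0
      have hW0 : 0 ≤ W := weakNorm_nonneg_s3 (conjExp p) M φ0
      have hsum_pos : 0 < ∑ i ∈ Finset.range M, |φ0 i (u (x0 i))| :=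
        lt_of_le_of_lt (mul_nonneg (mul_nonneg h4 hL0) hW0) hlt
      have hW_pos : 0 < W := by
        rcases lt_or_eq_of_le hW0 with h | h
        · exact h
        · exfalso
          have hle : ∀ i ∈ Finset.range M, |φ0 i (u (x0 i))| ≤ 0 := by
            intro i hi
            have h2 := abs_apply_le_weakNorm (conjExp p) hq0 M φ0
              (Finset.mem_range.mp hi) (u (x0 i))
            rw [← hW_def, ← h] at h2
            simpa using h2
          exact absurd hsum_pos (not_lt.mpr (Finset.sum_nonpos hle))
      have hL_pos : 0 < L := by
        rcases lt_or_eq_of_le hL0 with h | h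
        · exact h
        · exfalso
          have hL_eq : (∑ i ∈ Finset.range M, ‖x0 i‖ ^ r) ^ (1/r) = L := by
            rw [hL_def, lpNormFin, if_neg hp_ne_top]
          have hsum_nonneg : 0 ≤ ∑ i ∈ Finset.range M, ‖x0 i‖ ^ r :=
            Finset.sum_nonneg fun i _ => Real.rpow_nonneg (norm_nonneg _) _
          have hS0 : ∑ i ∈ Finset.range M, ‖x0 i‖ ^ r ≤ 0 := by
            have := rpow_le_of_rpow_inv_le hr0 hsum_nonneg (le_of_eq (hL_eq.trans h.symm))
            rwa [Real.zero_rpow hr0.ne'] at this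
          have hall : ∀ i ∈ Finset.range M, x0 i = 0 := by
            intro i hi
            have hterm := (Finset.sum_eq_zero_iff_of_nonneg
              (fun i _ => Real.rpow_nonneg (norm_nonneg _) _)).mp
              (le_antisymm hS0 hsum_nonneg) i hi
            have : ‖x0 i‖ = 0 := by
              by_contra hne
              have : (0:ℝ) < ‖x0 i‖ := lt_of_le_of_ne (norm_nonneg _) (Ne.symm hne)
              exact absurd hterm (ne_of_gt (Real.rpow_pos_of_pos this r))
            exact norm_eq_zero.mp this
          have : ∑ i ∈ Finset.range M, |φ0 i (u (x0 i))| = 0 :=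
            Finset.sum_eq_zero fun i hi => by rw [hall i hi]; simp
          exact absurd hsum_pos (by rw [this] at hsum_pos ⊢; exact lt_irrefl 0)
      set c1 := (1/2:ℝ)^n / L with hc1_def
      set c2 := (1/2:ℝ)^n / W with hc2_def
      have hc1 : 0 < c1 := by positivity
      have hc2 : 0 < c2 := by positivity
      refine ⟨M, fun i => c1 • x0 i, fun i => c2 • φ0 i, ?_, ?_, ?_⟩
      · rw [lpNormFin_smul p hp_ne_top hr0 M x0 hc1.le, ← hL_def, hc1_def,
          div_mul_cancel₀ _ hL_pos.ne']
      · calc weakNorm (conjExp p) M (fun i => c2 • φ0 i) ≤ c2 * W :=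
              weakNorm_smul_le (conjExp p) hqr M φ0 hc2.le
          _ = (1/2:ℝ)^n := by rw [hc2_def, div_mul_cancel₀ _ hW_pos.ne']
      · have hterm : ∀ i, |(c2 • φ0 i) (u (c1 • x0 i))| = c1 * c2 * |φ0 i (u (x0 i))| := by
          intro i
          rw [ContinuousLinearMap.smul_apply, u.map_smul, (φ0 i).map_smul,
            smul_eq_mul, smul_eq_mul, abs_mul, abs_mul, abs_of_nonneg hc2.le,
            abs_of_nonneg hc1.le]
          ring
        have hpow : (1/2:ℝ)^n * (1/2:ℝ)^n * 4^n = 1 := by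
          rw [← mul_pow, ← mul_pow]; norm_num
        have hval : c1 * c2 * ((4:ℝ)^n * L * W) = 1 := by
          have hexp : c1 * c2 * ((4:ℝ)^n * L * W) =
              ((1/2:ℝ)^n * (1/2:ℝ)^n * 4^n) * ((L / L) * (W / W)) := by
            rw [hc1_def, hc2_def]; ring
          rw [hexp, div_self hL_pos.ne', div_self hW_pos.ne', mul_one, mul_one, hpow]
        calc (1:ℝ) = c1 * c2 * ((4:ℝ)^n * L * W) := hval.symm
          _ < c1 * c2 * ∑ i ∈ Finset.range M, |φ0 i (u (x0 i))| :=
              mul_lt_mul_of_pos_left hlt (mul_pos hc1 hc2)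
          _ = ∑ i ∈ Finset.range M, |(c2 • φ0 i) (u (c1 • x0 i))| := by
              rw [Finset.mul_sum]
              exact (Finset.sum_congr rfl fun i _ => by rw [hterm i]).symm
    choose M xx φφ hx hφ hsum using blocks
    set xb : ℕ → ℕ → X := fun n i => if i < M n then xx n i else 0 with hxb
    set φb : ℕ → ℕ → (Y →L[ℝ] ℝ) := fun n i => if i < M n then φφ n i else 0 with hφb
    set Xb : ℕ → X := fun k => xb (blockSplit M k).1 (blockSplit M k).2 with hXb
    set Φb : ℕ → (Y →L[ℝ] ℝ) := fun k => φb (blockSplit M k).1 (blockSplit M k).2 with hΦb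
    have hblockx : ∀ n, ∑ i ∈ Finset.range (M n + 1), ‖xb n i‖ ^ r ≤ (1/2:ℝ)^n := by
      intro n
      rw [Finset.sum_range_succ]
      have hpad : ‖xb n (M n)‖ ^ r = 0 := by
        simp [hxb, Real.zero_rpow hr0.ne']
      have hsum_eq : ∑ i ∈ Finset.range (M n), ‖xb n i‖ ^ r =
          ∑ i ∈ Finset.range (M n), ‖xx n i‖ ^ r :=
        Finset.sum_congr rfl fun i hi => by
          rw [hxb]; simp [Finset.mem_range.mp hi]
      have hx' := hx n
      rw [lpNormFin, if_neg hp_ne_top] at hx'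
      have hmain : ∑ i ∈ Finset.range (M n), ‖xx n i‖ ^ r ≤ ((1/2:ℝ)^n) ^ r :=
        rpow_le_of_rpow_inv_le hr0
          (Finset.sum_nonneg fun i _ => Real.rpow_nonneg (norm_nonneg _) _) hx'
      have hshrink : ((1/2:ℝ)^n) ^ r ≤ (1/2:ℝ)^n := by
        have h1 : ((1/2:ℝ)^n) ^ r ≤ ((1/2:ℝ)^n) ^ (1:ℝ) :=
          Real.rpow_le_rpow_of_exponent_ge (by positivity)
            (pow_le_one₀ (by norm_num) (by norm_num)) hr1
        rwa [Real.rpow_one] at h1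
      rw [hpad, add_zero, hsum_eq]
      exact hmain.trans hshrink
    have hA : ∀ K, ∑ k ∈ Finset.range K, ‖Xb k‖ ^ r ≤ 2 := by
      intro K
      have h1 : ∑ k ∈ Finset.range K, ‖Xb k‖ ^ r =
          ∑ k ∈ Finset.range K, (fun q : ℕ × ℕ => ‖xb q.1 q.2‖ ^ r) (blockSplit M k) :=
        Finset.sum_congr rfl fun k _ => by simp only [hXb]
      rw [h1]
      refine le_trans (sum_prefix_le_blocks (g := fun q : ℕ × ℕ => ‖xb q.1 q.2‖ ^ r)
        (fun q => Real.rpow_nonneg (norm_nonneg _) _) M K) ?_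
      refine le_trans (Finset.sum_le_sum fun n _ => hblockx n) ?_
      exact sum_geometric_two_le K
    obtain ⟨CT, hCT0, hCT⟩ := hX
    have hXbRad : MemRad Xb := by
      refine ⟨CT * 2, fun m => ?_⟩
      have hlp : lpNormFin p m Xb ≤ 2 := by
        rw [lpNormFin, if_neg hp_ne_top]
        have h2 : (∑ k ∈ Finset.range m, ‖Xb k‖ ^ r) ^ (1/r) ≤ (2:ℝ) ^ (1/r) :=
          Real.rpow_le_rpow (Finset.sum_nonneg fun i _ =>
            Real.rpow_nonneg (norm_nonneg _) _) (hA m) (by positivity)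
        refine h2.trans ?_
        have h3 : (2:ℝ) ^ (1/r) ≤ (2:ℝ) ^ (1:ℝ) :=
          Real.rpow_le_rpow_of_exponent_le (by norm_num)
            (by rw [div_le_one hr0]; exact hr1)
        rwa [Real.rpow_one] at h3
      calc radNorm m Xb ≤ CT * lpNormFin p m Xb := hCT m Xb
        _ ≤ CT * 2 := mul_le_mul_of_nonneg_left hlp hCT0
    have hΦbWeak : MemWeakLp (conjExp p) Φb := by
      refine ⟨2, fun m => ?_⟩
      rcases eq_or_ne (conjExp p) ∞ with hqe | hqe
      · rw [hqe, weakNorm, if_pos rfl]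
        refine Real.iSup_le (fun k => ?_) (by norm_num)
        have hk := blockSplit_lt M (k : ℕ)
        simp only [hΦb]
        by_cases hi : (blockSplit M (k:ℕ)).2 < M (blockSplit M (k:ℕ)).1
        · set n := (blockSplit M (k:ℕ)).1
          set i := (blockSplit M (k:ℕ)).2
          have hb : φb n i = φφ n i := by rw [hφb]; simp [hi]
          have h2n := hφ n
          rw [hqe, weakNorm, if_pos rfl] at h2n
          have hle : ‖φφ n i‖ ≤ ⨆ j : Fin (M n), ‖φφ n (j:ℕ)‖ :=
            le_ciSup (f := fun j : Fin (M n) => ‖φφ n (j:ℕ)‖)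
              (Set.Finite.bddAbove (Set.finite_range _)) (⟨i, hi⟩ : Fin (M n))
          have hone : ((1:ℝ)/2)^n ≤ 1 := pow_le_one₀ (by norm_num) (by norm_num)
          rw [hb]
          linarith [hle.trans h2n]
        · have hb : φb (blockSplit M (k:ℕ)).1 (blockSplit M (k:ℕ)).2 = 0 := by
            rw [hφb]; simp [hi]
          rw [hb]; simp
      · have hs0 := hqr hqe
        have hs1 := hq1 hqe
        rw [weakNorm, if_neg hqe]
        refine Real.iSup_le (fun Ψ => ?_) (by norm_num)
        have hsum2 : ∑ k ∈ Finset.range m, |Ψ.1 (Φb k)| ^ (conjExp p).toReal ≤ 2 := by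
          have h1 : ∑ k ∈ Finset.range m, |Ψ.1 (Φb k)| ^ (conjExp p).toReal =
              ∑ k ∈ Finset.range m,
                (fun q : ℕ × ℕ => |Ψ.1 (φb q.1 q.2)| ^ (conjExp p).toReal)
                  (blockSplit M k) :=
              Finset.sum_congr rfl fun k _ => by simp only [hΦb]
          rw [h1]
          refine le_trans (sum_prefix_le_blocks
            (g := fun q : ℕ × ℕ => |Ψ.1 (φb q.1 q.2)| ^ (conjExp p).toReal)
            (fun q => Real.rpow_nonneg (abs_nonneg _) _) M m) ?_
          refine le_trans (Finset.sum_le_sum (fun n _ => ?_)) (sum_geometric_two_le m)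
          rw [Finset.sum_range_succ]
          have hpad : |Ψ.1 (φb n (M n))| ^ (conjExp p).toReal = 0 := by
            rw [hφb]
            simp [Real.zero_rpow hs0.ne']
          have hcongr : ∑ i ∈ Finset.range (M n), |Ψ.1 (φb n i)| ^ (conjExp p).toReal =
              ∑ i ∈ Finset.range (M n), |Ψ.1 (φφ n i)| ^ (conjExp p).toReal :=
            Finset.sum_congr rfl fun i hi => by
              rw [hφb]; simp [Finset.mem_range.mp hi]
          have hle := (le_weakNorm (conjExp p) hqe (M n) (φφ n) Ψ).trans (hφ n)
          have hmain := rpow_le_of_rpow_inv_le hs0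
            (Finset.sum_nonneg fun i _ => Real.rpow_nonneg (abs_nonneg _) _) hle
          have hshrink : ((1/2:ℝ)^n) ^ (conjExp p).toReal ≤ (1/2:ℝ)^n := by
            have h2 : ((1/2:ℝ)^n) ^ (conjExp p).toReal ≤ ((1/2:ℝ)^n) ^ (1:ℝ) :=
              Real.rpow_le_rpow_of_exponent_ge (by positivity)
                (pow_le_one₀ (by norm_num) (by norm_num)) hs1.le
            rwa [Real.rpow_one] at h2
          rw [hpad, add_zero, hcongr]
          exact hmain.trans hshrink
        have h3 : (∑ k ∈ Finset.range m, |Ψ.1 (Φb k)| ^ (conjExp p).toReal) ^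
            (1/(conjExp p).toReal) ≤ (2:ℝ) ^ (1/(conjExp p).toReal) :=
          Real.rpow_le_rpow (Finset.sum_nonneg fun i _ =>
            Real.rpow_nonneg (abs_nonneg _) _) hsum2 (by positivity)
        refine h3.trans ?_
        have h4 : (2:ℝ) ^ (1/(conjExp p).toReal) ≤ (2:ℝ) ^ (1:ℝ) :=
          Real.rpow_le_rpow_of_exponent_le (by norm_num)
            (by rw [div_le_one hs0]; exact hs1.le)
        rwa [Real.rpow_one] at h4
    have hsummable := hu Xb hXbRad Φb hΦbWeak
    have hts : ∀ N : ℕ, (N:ℝ) ≤ ∑' k, |Φb k (u (Xb k))| := by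
      intro N
      have h1 : ∑ k ∈ Finset.range (blockOffset M N), |Φb k (u (Xb k))| =
          ∑ n ∈ Finset.range N, ∑ i ∈ Finset.range (M n + 1), |φb n i (u (xb n i))| :=
        sum_blockSplit (fun q => |φb q.1 q.2 (u (xb q.1 q.2))|) M N
      have h2 : ∀ n, (1:ℝ) ≤ ∑ i ∈ Finset.range (M n + 1), |φb n i (u (xb n i))| := by
        intro n
        rw [Finset.sum_range_succ]
        have hpad : |φb n (M n) (u (xb n (M n)))| = 0 := by
          rw [hφb]; simp
        have hcongr : ∑ i ∈ Finset.range (M n), |φb n i (u (xb n i))| =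
            ∑ i ∈ Finset.range (M n), |φφ n i (u (xx n i))| :=
          Finset.sum_congr rfl fun i hi => by
            rw [hxb, hφb]; simp [Finset.mem_range.mp hi]
        rw [hpad, add_zero, hcongr]
        exact (hsum n).le
      calc (N:ℝ) = ∑ n ∈ Finset.range N, (1:ℝ) := by simp
        _ ≤ ∑ n ∈ Finset.range N, ∑ i ∈ Finset.range (M n + 1),
              |φb n i (u (xb n i))| := Finset.sum_le_sum fun n _ => h2 n
        _ = ∑ k ∈ Finset.range (blockOffset M N), |Φb k (u (Xb k))| := h1.symm
        _ ≤ ∑' k, |Φb k (u (Xb k))| :=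
            Summable.sum_le_tsum _ (fun k _ => abs_nonneg _) hsummable
    obtain ⟨N, hN⟩ := exists_nat_gt (∑' k, |Φb k (u (Xb k))|)
    exact absurd (hts N) (not_le.mpr hN)
  refine ⟨?_, cohen⟩
  by_cases hqe : conjExp p = ∞
  · rw [IsPSumming, if_pos hqe]; trivial
  · rw [IsPSumming, if_neg hqe]
    have hs0 := hqr hqe
    have hs1 := hq1 hqe
    have hp1' : p ≠ 1 := by rintro rfl; exact hqe conjExp_one
    have hconj : 1 / r + 1 / (conjExp p).toReal = 1 :=
      (conjExp_facts (lt_of_le_of_ne hp1 (Ne.symm hp1')) hp_ne_top).2.2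
    set s := (conjExp p).toReal with hs_def
    intro φ hφw
    obtain ⟨Cw, hCw⟩ := hφw
    have hCw0 : 0 ≤ Cw := le_trans (weakNorm_nonneg_s3 _ 0 φ) (hCw 0)
    obtain ⟨C, hC0, hCoh⟩ := cohen
    set b : ℕ → ℝ := fun i => ‖adj u (φ i)‖ with hb
    have hb0 : ∀ i, 0 ≤ b i := fun i => norm_nonneg _
    refine summable_of_sum_range_le (c := (C * Cw) ^ s)
      (fun i => Real.rpow_nonneg (norm_nonneg _) s) (fun m => ?_)
    set S := ∑ i ∈ Finset.range m, b i ^ s with hS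
    have hS0 : 0 ≤ S := Finset.sum_nonneg fun i _ => Real.rpow_nonneg (hb0 i) _
    set a : ℕ → ℝ := fun i => b i ^ (s - 1) with ha
    have ha0 : ∀ i, 0 ≤ a i := fun i => Real.rpow_nonneg (hb0 i) _
    have hab : ∀ i, a i * b i = b i ^ s := by
      intro i
      rcases eq_or_ne (b i) 0 with h0 | h0
      · rw [h0, mul_zero, Real.zero_rpow hs0.ne']
      · calc a i * b i = b i ^ (s-1) * b i := rfl
          _ = b i ^ ((s-1) + 1) := (Real.rpow_add_one h0 _).symm
          _ = b i ^ s := by norm_num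
    have hsr : (s - 1) * r = s := by
      have hr0' : r ≠ 0 := hr0.ne'
      have hs0' : s ≠ 0 := hs0.ne'
      field_simp at hconj
      nlinarith [hconj]
    have har : ∀ i, a i ^ r = b i ^ s := by
      intro i
      calc a i ^ r = (b i ^ (s-1)) ^ r := rfl
        _ = b i ^ ((s-1) * r) := (Real.rpow_mul (hb0 i) _ _).symm
        _ = b i ^ s := by rw [hsr]
    have main : ∀ ε : ℝ, 0 < ε →
        S ≤ C * Cw * S ^ (1/r) + ε * (∑ i ∈ Finset.range m, a i) := by
      intro ε hε
      have hex : ∀ i, ∃ x : X, ‖x‖ ≤ 1 ∧ b i - ε ≤ |φ i (u x)| := by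
        intro i
        obtain ⟨x, hx1, hx2⟩ := (adj u (φ i)).exists_lt_apply_of_lt_opNorm
          (r := b i - ε) (by rw [hb]; simp only []; linarith)
        refine ⟨x, hx1.le, ?_⟩
        have heq : ‖adj u (φ i) x‖ = |φ i (u x)| := by
          rw [Real.norm_eq_abs]; rfl
        rw [← heq]; exact hx2.le
      choose xs hxs1 hxs2 using hex
      have step1 : S ≤ ∑ i ∈ Finset.range m, (a i * |φ i (u (xs i))|) +
          ε * ∑ i ∈ Finset.range m, a i := by
        rw [hS, Finset.mul_sum, ← Finset.sum_add_distrib]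
        refine Finset.sum_le_sum fun i _ => ?_
        rw [← hab i]
        calc a i * b i ≤ a i * (|φ i (u (xs i))| + ε) :=
              mul_le_mul_of_nonneg_left (by linarith [hxs2 i]) (ha0 i)
          _ = a i * |φ i (u (xs i))| + ε * a i := by ring
      have step2 : ∑ i ∈ Finset.range m, (a i * |φ i (u (xs i))|) =
          ∑ i ∈ Finset.range m, |φ i (u (a i • xs i))| := by
        refine Finset.sum_congr rfl fun i _ => ?_
        rw [u.map_smul, (φ i).map_smul, smul_eq_mul, abs_mul, abs_of_nonneg (ha0 i)]
      have step3 := hCoh m (fun i => a i • xs i) φ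
      have step4 : lpNormFin p m (fun i => a i • xs i) ≤ S ^ (1/r) := by
        rw [lpNormFin, if_neg hp_ne_top]
        refine Real.rpow_le_rpow (Finset.sum_nonneg fun i _ =>
          Real.rpow_nonneg (norm_nonneg _) _) ?_ (by positivity)
        rw [hS]
        refine Finset.sum_le_sum fun i _ => ?_
        rw [← har i]
        refine Real.rpow_le_rpow (norm_nonneg _) ?_ hr0.le
        calc ‖a i • xs i‖ = |a i| * ‖xs i‖ := by rw [norm_smul, Real.norm_eq_abs]
          _ = a i * ‖xs i‖ := by rw [abs_of_nonneg (ha0 i)]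
          _ ≤ a i * 1 := mul_le_mul_of_nonneg_left (hxs1 i) (ha0 i)
          _ = a i := mul_one _
      have step5 : weakNorm (conjExp p) m φ ≤ Cw := hCw m
      have hlp0 : 0 ≤ lpNormFin p m (fun i => a i • xs i) := lpNormFin_nonneg _ _ _
      have hw0 : 0 ≤ weakNorm (conjExp p) m φ := weakNorm_nonneg_s3 _ _ _
      have hchain : C * lpNormFin p m (fun i => a i • xs i) * weakNorm (conjExp p) m φ ≤
          C * S ^ (1/r) * Cw := by
        refine mul_le_mul ?_ step5 hw0 ?_
        · exact mul_le_mul_of_nonneg_left step4 hC0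
        · positivity
      calc S ≤ ∑ i ∈ Finset.range m, |φ i (u (a i • xs i))| +
            ε * ∑ i ∈ Finset.range m, a i := by rw [← step2]; exact step1
        _ ≤ C * S ^ (1/r) * Cw + ε * ∑ i ∈ Finset.range m, a i := by
            have := step3.trans hchain
            linarith
        _ = C * Cw * S ^ (1/r) + ε * ∑ i ∈ Finset.range m, a i := by ring
    have hA0 : 0 ≤ ∑ i ∈ Finset.range m, a i := Finset.sum_nonneg fun i _ => ha0 i
    have key : S ≤ C * Cw * S ^ (1/r) := by
      refine le_of_forall_pos_le_add fun δ hδ => ?_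
      have hεpos : 0 < δ / ((∑ i ∈ Finset.range m, a i) + 1) := by positivity
      refine le_trans (main _ hεpos) ?_
      have hstep : δ / ((∑ i ∈ Finset.range m, a i) + 1) *
          (∑ i ∈ Finset.range m, a i) ≤ δ := by
        rw [div_mul_eq_mul_div, div_le_iff₀ (by positivity)]
        nlinarith
      linarith
    rcases eq_or_lt_of_le hS0 with h0 | hpos
    · rw [← h0]
      exact Real.rpow_nonneg (mul_nonneg hC0 hCw0) s
    · have hSr : 0 < S ^ (1/r) := Real.rpow_pos_of_pos hpos _
      have hsplit : S = S ^ (1/s) * S ^ (1/r) := by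
        rw [← Real.rpow_add hpos]
        have h1 : 1/s + 1/r = 1 := by linarith
        rw [h1, Real.rpow_one]
      have h2 : S ^ (1/s) * S ^ (1/r) ≤ (C * Cw) * S ^ (1/r) := by
        rw [← hsplit]; linarith
      have h3 : S ^ (1/s) ≤ C * Cw := le_of_mul_le_mul_right h2 hSr
      exact rpow_le_of_rpow_inv_le hs0 hS0 h3

end
end

section
/- Let X and Y be Banach spaces such that X has type 2, and let u : X → Y be a continuous linear operator. Then u takes almost unconditionally summable sequences in X into members of ℓ_2⟨Y⟩ if and only if the adjoint u* is absolutely 2-summing (equivalently, u is Cohen strongly 2-summing). -/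
open MeasureTheory Finset Filter
open scoped ENNReal NNReal

noncomputable section

universe u v

/-! ### Auxiliary machinery -/

section Aux

lemma two_ne_top' : (2:ℝ≥0∞) ≠ ∞ := ENNReal.ofNat_ne_top

lemma toReal_two' : (2:ℝ≥0∞).toReal = 2 := by simp

lemma conjExp_two : conjExp 2 = 2 := by
  rw [conjExp, ENNReal.one_sub_inv_two, inv_inv]

lemma rpow_half_sq {s : ℝ} (hs : 0 ≤ s) : (s ^ ((1:ℝ)/2))^2 = s := by
  rw [← Real.rpow_natCast (s ^ ((1:ℝ)/2)) 2, ← Real.rpow_mul hs]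
  norm_num

lemma four_rpow_half : (4:ℝ) ^ ((1:ℝ)/2) = 2 := by
  rw [show (4:ℝ) = 2^(2:ℕ) by norm_num, ← Real.rpow_natCast (2:ℝ) 2,
    ← Real.rpow_mul (by norm_num : (0:ℝ) ≤ 2)]
  norm_num

/-! #### Discrete sign vectors -/

def sg (m k i : ℕ) : ℝ := if Nat.testBit k (m - 1 - i) then -1 else 1

lemma sum_range_two_pow_succ (m : ℕ) (f : ℕ → ℝ) :
    ∑ k ∈ range (2^(m+1)), f k
      = ∑ k ∈ range (2^m), f k + ∑ k ∈ range (2^m), f (2^m + k) := by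
  have h1 : 2^(m+1) = 2^m + 2^m := by rw [pow_succ]; omega
  rw [h1, Finset.sum_range_add]

lemma orthBit : ∀ m a b, a < m → b < m →
    ∑ k ∈ range (2^m), ((if Nat.testBit k a then (-1:ℝ) else 1) *
      (if Nat.testBit k b then (-1:ℝ) else 1)) = if a = b then (2^m : ℝ) else 0 := by
  intro m
  induction m with
  | zero => intro a b ha _; omega
  | succ m ih =>
    intro a b ha hb
    rcases Nat.lt_or_ge a m with ham | ham <;> rcases Nat.lt_or_ge b m with hbm | hbm
    · rw [sum_range_two_pow_succ]
      have e2 : ∑ k ∈ range (2^m), ((if Nat.testBit (2^m + k) a then (-1:ℝ) else 1) *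
          (if Nat.testBit (2^m + k) b then (-1:ℝ) else 1)) =
          ∑ k ∈ range (2^m), ((if Nat.testBit k a then (-1:ℝ) else 1) *
          (if Nat.testBit k b then (-1:ℝ) else 1)) := by
        apply Finset.sum_congr rfl
        intro k _
        rw [Nat.testBit_two_pow_add_gt ham, Nat.testBit_two_pow_add_gt hbm]
      rw [e2, ih a b ham hbm]
      split <;> push_cast <;> ring
    · have hbm' : m = b := by omega
      subst hbm'
      rw [sum_range_two_pow_succ]
      have e1 : ∑ k ∈ range (2^m), ((if Nat.testBit k a then (-1:ℝ) else 1) *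
          (if Nat.testBit k m then (-1:ℝ) else 1)) =
          ∑ k ∈ range (2^m), (if Nat.testBit k a then (-1:ℝ) else 1) := by
        apply Finset.sum_congr rfl; intro k hk; rw [Finset.mem_range] at hk
        rw [Nat.testBit_lt_two_pow hk]; simp
      have e2 : ∑ k ∈ range (2^m), ((if Nat.testBit (2^m + k) a then (-1:ℝ) else 1) *
          (if Nat.testBit (2^m + k) m then (-1:ℝ) else 1)) =
          ∑ k ∈ range (2^m), -(if Nat.testBit k a then (-1:ℝ) else 1) := by
        apply Finset.sum_congr rfl; intro k hk; rw [Finset.mem_range] at hk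
        rw [Nat.testBit_two_pow_add_eq, Nat.testBit_lt_two_pow hk,
          Nat.testBit_two_pow_add_gt ham]
        by_cases h : Nat.testBit k a <;> simp [h]
      rw [e1, e2, Finset.sum_neg_distrib]
      have hab : a ≠ m := by omega
      simp [hab]
    · have ham' : m = a := by omega
      subst ham'
      rw [sum_range_two_pow_succ]
      have e1 : ∑ k ∈ range (2^m), ((if Nat.testBit k m then (-1:ℝ) else 1) *
          (if Nat.testBit k b then (-1:ℝ) else 1)) =
          ∑ k ∈ range (2^m), (if Nat.testBit k b then (-1:ℝ) else 1) := by
        apply Finset.sum_congr rfl; intro k hk; rw [Finset.mem_range] at hk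
        rw [Nat.testBit_lt_two_pow hk]; simp
      have e2 : ∑ k ∈ range (2^m), ((if Nat.testBit (2^m + k) m then (-1:ℝ) else 1) *
          (if Nat.testBit (2^m + k) b then (-1:ℝ) else 1)) =
          ∑ k ∈ range (2^m), -(if Nat.testBit k b then (-1:ℝ) else 1) := by
        apply Finset.sum_congr rfl; intro k hk; rw [Finset.mem_range] at hk
        rw [Nat.testBit_two_pow_add_eq, Nat.testBit_lt_two_pow hk,
          Nat.testBit_two_pow_add_gt hbm]
        by_cases h : Nat.testBit k b <;> simp [h]
      rw [e1, e2, Finset.sum_neg_distrib]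
      have hab : m ≠ b := by omega
      simp [hab]
    · have ham' : m = a := by omega
      subst ham'
      have hbm' : m = b := by omega
      subst hbm'
      have e : ∀ k ∈ range (2^(m+1)), ((if Nat.testBit k m then (-1:ℝ) else 1) *
          (if Nat.testBit k m then (-1:ℝ) else 1)) = 1 := by
        intro k _; split <;> norm_num
      rw [Finset.sum_congr rfl e]
      simp

lemma sg_orth {m : ℕ} {i j : ℕ} (hi : i < m) (hj : j < m) :
    ∑ k ∈ range (2^m), sg m k i * sg m k j = if i = j then (2^m : ℝ) else 0 := by
  unfold sg
  rw [orthBit m (m-1-i) (m-1-j) (by omega) (by omega)]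
  congr 1
  simp only [eq_iff_iff]
  omega

lemma sg_quad (m : ℕ) (G : ℕ → ℕ → ℝ) :
    ∑ k ∈ range (2^m), ∑ i ∈ range m, ∑ j ∈ range m, (sg m k i * sg m k j) * G i j
      = 2^m * ∑ i ∈ range m, G i i := by
  rw [Finset.sum_comm]
  have e1 : ∀ i ∈ range m, ∑ k ∈ range (2^m), ∑ j ∈ range m, (sg m k i * sg m k j) * G i j
      = ∑ j ∈ range m, (∑ k ∈ range (2^m), sg m k i * sg m k j) * G i j := by
    intro i _
    rw [Finset.sum_comm]
    apply Finset.sum_congr rfl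
    intro j _
    rw [← Finset.sum_mul]
  rw [Finset.sum_congr rfl e1]
  have e2 : ∀ i ∈ range m, ∑ j ∈ range m, (∑ k ∈ range (2^m), sg m k i * sg m k j) * G i j
      = 2^m * G i i := by
    intro i hi
    have h1 : ∀ j ∈ range m, (∑ k ∈ range (2^m), sg m k i * sg m k j) * G i j
        = (if i = j then (2^m:ℝ) * G i j else 0) := by
      intro j hj
      rw [sg_orth (Finset.mem_range.1 hi) (Finset.mem_range.1 hj)]
      split <;> simp
    rw [Finset.sum_congr rfl h1, Finset.sum_ite_eq, if_pos hi]
  rw [Finset.sum_congr rfl e2, Finset.mul_sum]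

lemma sg_sq_sum (m : ℕ) (c : ℕ → ℝ) :
    ∑ k ∈ range (2^m), (∑ i ∈ range m, sg m k i * c i)^2
      = 2^m * ∑ i ∈ range m, (c i)^2 := by
  have e : ∀ k ∈ range (2^m), (∑ i ∈ range m, sg m k i * c i)^2
      = ∑ i ∈ range m, ∑ j ∈ range m, (sg m k i * sg m k j) * (c i * c j) := by
    intro k _
    rw [sq, Finset.sum_mul_sum]
    apply Finset.sum_congr rfl; intro i _
    apply Finset.sum_congr rfl; intro j _
    ring
  rw [Finset.sum_congr rfl e, sg_quad]
  congr 1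
  apply Finset.sum_congr rfl; intro i _; ring

/-! #### Rademacher functions on dyadic intervals -/

lemma fract_lt_half_iff (y : ℝ) : Int.fract y < 1/2 ↔ Even ⌊2*y⌋ := by
  have hsplit : (2:ℝ)*y = ((2*⌊y⌋ : ℤ) : ℝ) + 2*Int.fract y := by
    have := Int.floor_add_fract y
    push_cast
    nlinarith [Int.floor_add_fract y]
  have hfloor : ⌊(2:ℝ)*y⌋ = 2*⌊y⌋ + ⌊2*Int.fract y⌋ := by
    rw [hsplit, Int.floor_intCast_add]
  constructor
  · intro h
    have h0 : ⌊2*Int.fract y⌋ = 0 := by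
      apply Int.floor_eq_zero_iff.2
      constructor
      · have := Int.fract_nonneg y; linarith
      · simpa using by linarith
    rw [hfloor, h0]
    exact ⟨⌊y⌋, by ring⟩
  · intro h
    by_contra hc
    push_neg at hc
    have h1 : ⌊2*Int.fract y⌋ = 1 := by
      rw [Int.floor_eq_iff]
      have := Int.fract_lt_one y
      constructor
      · push_cast; linarith
      · push_cast; linarith
    rw [hfloor, h1] at h
    rcases h with ⟨c, hcc⟩
    omega

lemma rademacher_dyadic {m k i : ℕ} (hi : i < m) {t : ℝ}
    (h1 : ((k:ℝ))/2^m ≤ t) (h2 : t < ((k:ℝ)+1)/2^m) :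
    rademacher i t = sg m k i := by
  set s : ℕ := m - 1 - i with hs
  have hm : m = (i+1) + s := by omega
  set N : ℕ := k / 2^s with hN
  have hps : (0:ℝ) < 2^s := by positivity
  have hpm : (0:ℝ) < 2^m := by positivity
  have hpi : (0:ℝ) < 2^(i+1) := by positivity
  have hsplit : (2:ℝ)^m = 2^(i+1) * 2^s := by
    rw [hm, pow_add]
  have hxl : ((k:ℝ))/2^s ≤ 2^(i+1) * t := by
    rw [div_le_iff₀ hps]
    calc ((k:ℝ)) = 2^(i+1) * (k / 2^m) * 2^s := by
          field_simp [hsplit]; rw [hsplit]; ring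
      _ ≤ 2^(i+1) * t * 2^s := by
          apply mul_le_mul_of_nonneg_right _ (le_of_lt hps)
          exact mul_le_mul_of_nonneg_left h1 (le_of_lt hpi)
  have hxu : 2^(i+1) * t < ((k:ℝ)+1)/2^s := by
    rw [lt_div_iff₀ hps]
    calc 2^(i+1) * t * 2^s < 2^(i+1) * (((k:ℝ)+1)/2^m) * 2^s := by
          apply mul_lt_mul_of_pos_right _ hps
          exact mul_lt_mul_of_pos_left h2 hpi
      _ = (k:ℝ)+1 := by field_simp [hsplit]; rw [hsplit]
  have hNle : ((N:ℝ)) ≤ (k:ℝ)/2^s := by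
    rw [le_div_iff₀ hps]
    have : N * 2^s ≤ k := Nat.div_mul_le_self k (2^s)
    exact_mod_cast this
  have hNup : ((k:ℝ)+1)/2^s ≤ (N:ℝ) + 1 := by
    rw [div_le_iff₀ hps]
    have hlt : k < (N+1) * 2^s := by
      have hmod := Nat.div_add_mod k (2^s)
      have hm2 : k % 2^s < 2^s := Nat.mod_lt _ (by positivity)
      have hh : k < 2^s * N + 2^s := by
        conv_lhs => rw [← hmod]
        exact Nat.add_lt_add_left hm2 _
      calc k < 2^s * N + 2^s := hh
        _ = (N+1) * 2^s := by ring
    have : k + 1 ≤ (N+1) * 2^s := hlt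
    calc ((k:ℝ)) + 1 ≤ ((N:ℝ)+1) * 2^s := by exact_mod_cast this
      _ = ((N:ℝ)+1) * 2^s := rfl
  have hfl : ⌊(2:ℝ)^(i+1) * t⌋ = (N:ℤ) := by
    rw [Int.floor_eq_iff]
    constructor
    · push_cast; linarith
    · push_cast; linarith
  have h2y : (2:ℝ) * ((2:ℝ)^i * t) = 2^(i+1) * t := by ring
  have key : Int.fract ((2:ℝ)^i * t) < 1/2 ↔ Even N := by
    rw [fract_lt_half_iff, h2y, hfl, Int.even_coe_nat]
  have htb : Nat.testBit k s = decide (N % 2 = 1) := by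
    rw [Nat.testBit_eq_decide_div_mod_eq]
  rw [rademacher, sg, ← hs, htb]
  by_cases hev : Even N
  · rw [if_pos (key.2 hev)]
    have : N % 2 = 0 := Nat.even_iff.1 hev
    simp [this]
  · rw [if_neg (fun hcc => hev (key.1 hcc))]
    have : N % 2 = 1 := Nat.odd_iff.1 (Nat.not_even_iff_odd.1 hev)
    simp [this]

/-! #### The Rademacher norm as a discrete average -/

variable {Z : Type u} [NormedAddCommGroup Z] [NormedSpace ℝ Z]

lemma rad_integral_discrete (m : ℕ) (z : ℕ → Z) :
    ∫ t in (0:ℝ)..1, ‖∑ i ∈ Finset.range m, rademacher i t • z i‖ ^ 2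
      = ((2:ℝ)^m)⁻¹ * ∑ k ∈ Finset.range (2^m), ‖∑ i ∈ Finset.range m, sg m k i • z i‖^2 := by
  set f : ℝ → ℝ := fun t => ‖∑ i ∈ Finset.range m, rademacher i t • z i‖ ^ 2 with hf
  set a : ℕ → ℝ := fun k => (k:ℝ)/2^m with ha
  set c : ℕ → ℝ := fun k => ‖∑ i ∈ Finset.range m, sg m k i • z i‖^2 with hc
  have hpm : (0:ℝ) < 2^m := by positivity
  have hae : ∀ k : ℕ, ∀ᵐ t : ℝ, t ∈ Set.uIoc (a k) (a (k+1)) → f t = c k := by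
    intro k
    have hlt : a k < a (k+1) := by
      rw [ha]; simp only
      rw [div_lt_div_iff_of_pos_right hpm]
      push_cast; linarith
    have hsub : {t : ℝ | ¬ (t ∈ Set.uIoc (a k) (a (k+1)) → f t = c k)} ⊆ {a (k+1)} := by
      intro t ht
      simp only [Set.mem_setOf_eq, Classical.not_imp] at ht
      obtain ⟨htI, hne⟩ := ht
      rw [Set.uIoc_of_le (le_of_lt hlt)] at htI
      by_contra hne2
      apply hne
      have ht1 : (k:ℝ)/2^m ≤ t := le_of_lt htI.1
      have ht2 : t < ((k:ℝ)+1)/2^m := by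
        rcases lt_of_le_of_ne htI.2 (by simpa using hne2) with h
        calc t < a (k+1) := h
          _ = ((k:ℝ)+1)/2^m := by rw [ha]; push_cast; ring_nf
      rw [hf, hc]
      simp only
      congr 2
      apply Finset.sum_congr rfl
      intro i hi
      rw [Finset.mem_range] at hi
      rw [rademacher_dyadic hi ht1 ht2]
    exact MeasureTheory.measure_mono_null hsub Real.volume_singleton
  have hint : ∀ k : ℕ, IntervalIntegrable f MeasureTheory.volume (a k) (a (k+1)) := by
    intro k
    apply (intervalIntegrable_const (c := c k)).congr_ae
    have h : ∀ᵐ x ∂(MeasureTheory.volume.restrict (Set.uIoc (a k) (a (k+1)))), f x = c k :=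
      (MeasureTheory.ae_restrict_iff' measurableSet_uIoc).2 (hae k)
    have h' : f =ᶠ[MeasureTheory.ae (MeasureTheory.volume.restrict (Set.uIoc (a k) (a (k+1))))]
        (fun _ => c k) := h
    exact h'.symm
  have hpiece : ∀ k : ℕ, ∫ t in (a k)..(a (k+1)), f t = ((2:ℝ)^m)⁻¹ * c k := by
    intro k
    rw [intervalIntegral.integral_congr_ae (g := fun _ => c k) (hae k),
      intervalIntegral.integral_const, smul_eq_mul]
    congr 1
    rw [ha]; push_cast; field_simp; ring
  have hsum := intervalIntegral.sum_integral_adjacent_intervals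
    (f := f) (μ := MeasureTheory.volume) (a := a) (n := 2^m) (fun k _ => hint k)
  have ha0 : a 0 = 0 := by simp [ha]
  have ha1 : a (2^m) = 1 := by rw [ha]; push_cast; field_simp
  rw [ha0, ha1] at hsum
  rw [← hsum]
  rw [Finset.mul_sum]
  apply Finset.sum_congr rfl
  intro k _
  exact hpiece k

lemma radNorm_discrete (m : ℕ) (z : ℕ → Z) :
    radNorm m z
      = (((2:ℝ)^m)⁻¹ * ∑ k ∈ Finset.range (2^m), ‖∑ i ∈ Finset.range m, sg m k i • z i‖^2)
        ^ ((1:ℝ)/2) := by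
  rw [radNorm, rad_integral_discrete]

lemma radNorm_nonneg_s4 (m : ℕ) (z : ℕ → Z) : 0 ≤ radNorm m z := by
  rw [radNorm_discrete]
  apply Real.rpow_nonneg
  positivity

lemma radNorm_sq (m : ℕ) (z : ℕ → Z) :
    (radNorm m z)^2
      = ((2:ℝ)^m)⁻¹ * ∑ k ∈ Finset.range (2^m), ‖∑ i ∈ Finset.range m, sg m k i • z i‖^2 := by
  rw [radNorm_discrete]
  exact rpow_half_sq (by positivity)

/-! #### Abel–Dini -/

def PS (b : ℕ → ℝ) (n : ℕ) : ℝ := ∑ i ∈ range n, b i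

def TT (b : ℕ → ℝ) (i : ℕ) : ℝ := max (PS b (i+1)) 1

lemma TT_pos (b : ℕ → ℝ) (i : ℕ) : 0 < TT b i := lt_of_lt_of_le one_pos (le_max_right _ _)

lemma PS_mono {b : ℕ → ℝ} (hb : ∀ i, 0 ≤ b i) : Monotone (PS b) := by
  intro p q hpq
  exact Finset.sum_le_sum_of_subset_of_nonneg (Finset.range_subset_range.2 hpq) (fun i _ _ => hb i)

lemma PS_nonneg {b : ℕ → ℝ} (hb : ∀ i, 0 ≤ b i) (n : ℕ) : 0 ≤ PS b n :=
  Finset.sum_nonneg fun i _ => hb i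

lemma PS_tendsto {b : ℕ → ℝ} (hb : ∀ i, 0 ≤ b i) (hns : ¬ Summable b) :
    Tendsto (PS b) atTop atTop := by
  by_contra hc
  exact hns ((summable_iff_not_tendsto_nat_atTop_of_nonneg hb).2 hc)

lemma abel_dini_summable {b : ℕ → ℝ} (hb : ∀ i, 0 ≤ b i) (hns : ¬ Summable b) :
    Summable (fun i => b i / (TT b i)^2) := by
  obtain ⟨i₀, hi₀⟩ := ((PS_tendsto hb hns).eventually_ge_atTop (1:ℝ)).exists
  set g : ℕ → ℝ := fun i => b i / (TT b i)^2 with hg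
  have hgnn : ∀ i, 0 ≤ g i := fun i => div_nonneg (hb i) (sq_nonneg _)
  set K : ℝ := ∑ i ∈ range i₀, g i with hK
  apply summable_of_sum_range_le hgnn (c := K + 1)
  intro m
  have hsub : ∑ i ∈ range m, g i ≤ ∑ i ∈ range (max m i₀), g i :=
    Finset.sum_le_sum_of_subset_of_nonneg (Finset.range_subset_range.2 (le_max_left _ _))
      (fun i _ _ => hgnn i)
  refine le_trans hsub ?_
  set M := max m i₀ with hM
  have hiM : i₀ ≤ M := le_max_right _ _
  have hsplit : ∑ i ∈ range M, g i = K + ∑ i ∈ Ico i₀ M, g i := by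
    rw [hK, range_eq_Ico, ← Finset.sum_Ico_consecutive g (Nat.zero_le _) hiM]; rw [range_eq_Ico]
  rw [hsplit]
  have hPSpos : ∀ i, i₀ ≤ i → (1:ℝ) ≤ PS b i := fun i hi => le_trans hi₀ (PS_mono hb hi)
  have hbound : ∀ i ∈ Ico i₀ M, g i ≤ 1/(PS b i) - 1/(PS b (i+1)) := by
    intro i hi
    rw [Finset.mem_Ico] at hi
    have h1 : (1:ℝ) ≤ PS b i := hPSpos i hi.1
    have h2 : PS b i ≤ PS b (i+1) := PS_mono hb (Nat.le_succ i)
    have hTT : TT b i = PS b (i+1) := max_eq_left (by linarith)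
    have hbi : b i = PS b (i+1) - PS b i := by
      rw [PS, PS, Finset.sum_range_succ]; ring
    have hpos1 : (0:ℝ) < PS b i := by linarith
    have hpos2 : (0:ℝ) < PS b (i+1) := by linarith
    have heq : 1/PS b i - 1/PS b (i+1) = (PS b (i+1) - PS b i)/(PS b i * PS b (i+1)) := by
      field_simp
    rw [hg]
    simp only
    rw [hTT, heq, ← hbi]
    exact div_le_div_of_nonneg_left (hb i) (by positivity) (by nlinarith)
  have htel : ∑ i ∈ Ico i₀ M, g i ≤ 1 := by
    calc ∑ i ∈ Ico i₀ M, g i ≤ ∑ i ∈ Ico i₀ M, (1/(PS b i) - 1/(PS b (i+1))) :=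
          Finset.sum_le_sum hbound
      _ = ∑ j ∈ range (M - i₀), ((fun i => 1/(PS b i)) (i₀+j) - (fun i => 1/(PS b i)) (i₀+j+1)) := by
          rw [Finset.sum_Ico_eq_sum_range]
      _ = 1/(PS b i₀) - 1/(PS b (i₀ + (M - i₀))) := by
          have := Finset.sum_range_sub' (fun j => 1/(PS b (i₀+j))) (M - i₀)
          simpa [Nat.add_assoc] using this
      _ ≤ 1 := by
          have h1 : (1:ℝ) ≤ PS b i₀ := hi₀
          have h2 : (0:ℝ) < PS b (i₀ + (M - i₀)) :=
            lt_of_lt_of_le one_pos (hPSpos _ (Nat.le_add_right _ _))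
          have h3 : 0 ≤ 1/(PS b (i₀ + (M-i₀))) := by positivity
          linarith [div_le_one_of_le₀ h1 (by linarith : (0:ℝ) ≤ PS b i₀)]
  linarith

lemma abel_dini_not_summable {b : ℕ → ℝ} (hb : ∀ i, 0 ≤ b i) (hns : ¬ Summable b) :
    ¬ Summable (fun i => b i / TT b i) := by
  intro hS
  set c : ℕ → ℝ := fun i => b i / TT b i with hc
  have hcnn : ∀ i, 0 ≤ c i := fun i => div_nonneg (hb i) (le_of_lt (TT_pos b i))
  set L : ℝ := ∑' i, c i with hL
  have hPL : Tendsto (fun n => ∑ i ∈ range n, c i) atTop (nhds L) := hS.hasSum.tendsto_sum_nat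
  obtain ⟨n, hn⟩ := (hPL.eventually (eventually_gt_nhds (by linarith : L - 1/2 < L))).exists
  obtain ⟨m, hm1, hm2⟩ := (((PS_tendsto hb hns).eventually_ge_atTop (2 * PS b n + 1)).and
    (eventually_ge_atTop (n+1))).exists
  have hSm1 : (1:ℝ) ≤ PS b m := by
    have := PS_nonneg hb n; linarith
  have hmono : ∀ i, i < m → TT b i ≤ PS b m := by
    intro i hi
    rw [TT]
    apply max_le (PS_mono hb hi) hSm1
  have hterm : ∀ i ∈ Ico n m, b i / PS b m ≤ c i := by
    intro i hi
    rw [Finset.mem_Ico] at hi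
    exact div_le_div_of_nonneg_left (hb i) (TT_pos b i) (hmono i hi.2)
  have hsum1 : (PS b m - PS b n) / PS b m ≤ ∑ i ∈ Ico n m, c i := by
    calc (PS b m - PS b n)/PS b m = ∑ i ∈ Ico n m, b i / PS b m := by
          rw [← Finset.sum_div]
          congr 1
          rw [Finset.sum_Ico_eq_sub _ (by omega : n ≤ m)]
          rfl
      _ ≤ ∑ i ∈ Ico n m, c i := Finset.sum_le_sum hterm
  have hhalf : (1:ℝ)/2 ≤ (PS b m - PS b n)/PS b m := by
    rw [le_div_iff₀ (by linarith)]
    have hn0 : 0 ≤ PS b n := PS_nonneg hb n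
    linarith
  have hPmn : ∑ i ∈ Ico n m, c i = ∑ i ∈ range m, c i - ∑ i ∈ range n, c i := by
    rw [Finset.sum_Ico_eq_sub _ (by omega : n ≤ m)]
  have hle : ∑ i ∈ range m, c i ≤ L := Summable.sum_le_tsum (range m) (fun i _ => hcnn i) hS
  linarith [hsum1, hhalf, hn]

end Aux
section Aux2

variable {Z : Type u} [NormedAddCommGroup Z] [NormedSpace ℝ Z]

lemma weakNorm_two (m : ℕ) (x : ℕ → Z) :
    weakNorm 2 m x
      = ⨆ φ : {φ : Z →L[ℝ] ℝ // ‖φ‖ ≤ 1}, (∑ i ∈ range m, (φ.1 (x i))^2) ^ ((1:ℝ)/2) := by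
  rw [weakNorm, if_neg two_ne_top']
  apply iSup_congr
  intro φ
  rw [toReal_two']
  congr 1
  apply Finset.sum_congr rfl
  intro i _
  rw [show ((2:ℝ)) = ((2:ℕ):ℝ) by norm_num, Real.rpow_natCast, sq_abs]

lemma weak_bdd (m : ℕ) (x : ℕ → Z) :
    BddAbove (Set.range fun φ : {φ : Z →L[ℝ] ℝ // ‖φ‖ ≤ 1} =>
      (∑ i ∈ range m, (φ.1 (x i))^2) ^ ((1:ℝ)/2)) := by
  refine ⟨(∑ i ∈ range m, ‖x i‖^2) ^ ((1:ℝ)/2), ?_⟩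
  rintro r ⟨φ, rfl⟩
  apply Real.rpow_le_rpow (Finset.sum_nonneg fun i _ => sq_nonneg _) ?_ (by norm_num)
  apply Finset.sum_le_sum
  intro i _
  have h1 : ‖φ.1 (x i)‖ ≤ ‖x i‖ := by
    calc ‖φ.1 (x i)‖ ≤ ‖φ.1‖ * ‖x i‖ := φ.1.le_opNorm (x i)
      _ ≤ 1 * ‖x i‖ := mul_le_mul_of_nonneg_right φ.2 (norm_nonneg _)
      _ = ‖x i‖ := one_mul _
  calc (φ.1 (x i))^2 = ‖φ.1 (x i)‖^2 := by rw [Real.norm_eq_abs, sq_abs]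
    _ ≤ ‖x i‖^2 := pow_le_pow_left₀ (norm_nonneg _) h1 2

lemma le_weakNorm_two (m : ℕ) (x : ℕ → Z) (φ : {φ : Z →L[ℝ] ℝ // ‖φ‖ ≤ 1}) :
    (∑ i ∈ range m, (φ.1 (x i))^2) ^ ((1:ℝ)/2) ≤ weakNorm 2 m x := by
  rw [weakNorm_two]
  exact le_ciSup (weak_bdd m x) φ

instance ballNonempty : Nonempty {φ : Z →L[ℝ] ℝ // ‖φ‖ ≤ 1} := ⟨⟨0, by simp⟩⟩

lemma weakNorm_two_le (m : ℕ) (x : ℕ → Z) {c : ℝ}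
    (h : ∀ φ : {φ : Z →L[ℝ] ℝ // ‖φ‖ ≤ 1}, (∑ i ∈ range m, (φ.1 (x i))^2) ^ ((1:ℝ)/2) ≤ c) :
    weakNorm 2 m x ≤ c := by
  rw [weakNorm_two]; exact ciSup_le h

lemma memWeak_sq_bound {x : ℕ → Z} (hx : MemWeakLp 2 x) :
    ∃ D, 0 ≤ D ∧ ∀ (m : ℕ) (φ : {φ : Z →L[ℝ] ℝ // ‖φ‖ ≤ 1}),
      ∑ i ∈ range m, (φ.1 (x i))^2 ≤ D := by
  obtain ⟨C, hC⟩ := hx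
  refine ⟨C^2, sq_nonneg _, ?_⟩
  intro m φ
  have h0 : 0 ≤ ∑ i ∈ range m, (φ.1 (x i))^2 := Finset.sum_nonneg fun i _ => sq_nonneg _
  have h1 : (∑ i ∈ range m, (φ.1 (x i))^2) ^ ((1:ℝ)/2) ≤ C :=
    le_trans (le_weakNorm_two m x φ) (hC m)
  calc ∑ i ∈ range m, (φ.1 (x i))^2 = ((∑ i ∈ range m, (φ.1 (x i))^2) ^ ((1:ℝ)/2))^2 :=
        (rpow_half_sq h0).symm
    _ ≤ C^2 := pow_le_pow_left₀ (Real.rpow_nonneg h0 _) h1 2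

lemma lpNormFin_two (m : ℕ) (x : ℕ → Z) :
    lpNormFin 2 m x = (∑ i ∈ range m, ‖x i‖^2) ^ ((1:ℝ)/2) := by
  rw [lpNormFin, if_neg two_ne_top', toReal_two']
  congr 1
  apply Finset.sum_congr rfl
  intro i _
  rw [show ((2:ℝ)) = ((2:ℕ):ℝ) by norm_num, Real.rpow_natCast]

lemma adj_apply {W : Type v} [NormedAddCommGroup W] [NormedSpace ℝ W]
    (u : Z →L[ℝ] W) (φ : W →L[ℝ] ℝ) (z : Z) : adj u φ z = φ (u z) := rfl

lemma isPSumming_two_iff {W : Type v} [NormedAddCommGroup W] [NormedSpace ℝ W]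
    (v : Z →L[ℝ] W) :
    IsPSumming 2 v ↔ ∀ x : ℕ → Z, MemWeakLp 2 x → Summable fun i => ‖v (x i)‖^(2:ℕ) := by
  rw [IsPSumming, if_neg two_ne_top']
  have e : ∀ x : ℕ → Z, (fun i => ‖v (x i)‖ ^ (2:ℝ≥0∞).toReal) = fun i => ‖v (x i)‖^(2:ℕ) := by
    intro x
    funext i
    rw [toReal_two', show ((2:ℝ)) = ((2:ℕ):ℝ) by norm_num, Real.rpow_natCast]
  constructor <;> intro h x hx
  · rw [← e x]; exact h x hx
  · rw [e x]; exact h x hx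

lemma dual_half (ψ : Z →L[ℝ] ℝ) : ∃ e : Z, ‖e‖ ≤ 1 ∧ ‖ψ‖/2 ≤ ψ e := by
  by_cases hψ : ψ = 0
  · exact ⟨0, by simp, by simp [hψ]⟩
  · have hn : 0 < ‖ψ‖ := norm_pos_iff.2 hψ
    by_contra hcon
    push_neg at hcon
    have hop : ‖ψ‖ ≤ ‖ψ‖/2 := by
      apply ψ.opNorm_le_bound (by positivity)
      intro e
      rcases eq_or_ne e 0 with rfl | he
      · simp
      · have hne : ‖e‖ ≠ 0 := norm_ne_zero_iff.2 he
        have h1 : ‖(‖e‖⁻¹ • e)‖ ≤ 1 := by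
          rw [norm_smul, Real.norm_eq_abs, abs_inv, abs_norm, inv_mul_cancel₀ hne]
        have h2 := hcon _ h1
        have h3 := hcon (-(‖e‖⁻¹ • e)) (by rw [norm_neg]; exact h1)
        rw [_root_.map_smul, smul_eq_mul] at h2
        rw [map_neg, _root_.map_smul, smul_eq_mul] at h3
        have h6 : ‖e‖⁻¹ * |ψ e| < ‖ψ‖/2 := by
          rcases le_or_gt 0 (ψ e) with hpos | hneg
          · rw [abs_of_nonneg hpos]; linarith
          · rw [abs_of_neg hneg]
            have : -(‖e‖⁻¹ * ψ e) = ‖e‖⁻¹ * -ψ e := by ring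
            linarith [h3]
        have hepos : 0 < ‖e‖ := lt_of_le_of_ne (norm_nonneg e) (Ne.symm hne)
        calc ‖ψ e‖ = ‖e‖ * (‖e‖⁻¹ * |ψ e|) := by
              rw [Real.norm_eq_abs]; field_simp
          _ ≤ ‖e‖ * (‖ψ‖/2) := mul_le_mul_of_nonneg_left (le_of_lt h6) (norm_nonneg e)
          _ = ‖ψ‖/2 * ‖e‖ := mul_comm _ _
    linarith

lemma summing_const_normalized {W : Type v} [NormedAddCommGroup W] [NormedSpace ℝ W]
    (v : Z →L[ℝ] W)
    (hq : ∀ x : ℕ → Z, MemWeakLp 2 x → Summable fun i => ‖v (x i)‖^(2:ℕ)) :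
    ∃ C, 0 ≤ C ∧ ∀ (m : ℕ) (x : ℕ → Z),
      (∀ φ : {φ : Z →L[ℝ] ℝ // ‖φ‖ ≤ 1}, ∑ i ∈ range m, (φ.1 (x i))^2 ≤ 1) →
      ∑ i ∈ range m, ‖v (x i)‖^2 ≤ C := by
  by_contra hcon
  push_neg at hcon
  have hsel : ∀ n : ℕ, ∃ (m : ℕ) (x : ℕ → Z),
      (∀ φ : {φ : Z →L[ℝ] ℝ // ‖φ‖ ≤ 1}, ∑ i ∈ range m, (φ.1 (x i))^2 ≤ 1) ∧
      (4:ℝ)^n < ∑ i ∈ range m, ‖v (x i)‖^2 := by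
    intro n
    obtain ⟨m, x, h1, h2⟩ := hcon ((4:ℝ)^n) (by positivity)
    exact ⟨m, x, h1, h2⟩
  choose ms xs hweak hbig using hsel
  have hms : ∀ n, 1 ≤ ms n := by
    intro n
    by_contra h
    have h0 : ms n = 0 := by omega
    have := hbig n
    rw [h0] at this
    simp at this
    have : (0:ℝ) < 4^n := by positivity
    linarith [hbig n]
  set L : ℕ → ℕ := fun n => ∑ p ∈ range n, ms p with hLdef
  have hLadd : ∀ n, L (n+1) = L n + ms n := by
    intro n; rw [hLdef]; simp [Finset.sum_range_succ]
  have hLle : ∀ n, n ≤ L n := by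
    intro n
    induction n with
    | zero => simp
    | succ p ih => rw [hLadd]; have := hms p; omega
  have hLmono : Monotone L := by
    apply monotone_nat_of_le_succ
    intro n; rw [hLadd]; omega
  set ν : ℕ → ℕ := fun j => Nat.findGreatest (fun n => L n ≤ j) j with hνdef
  have hν1 : ∀ j, L (ν j) ≤ j := by
    intro j
    have h := Nat.findGreatest_spec (P := fun n => L n ≤ j) (m := 0) (Nat.zero_le j)
      (by rw [hLdef]; simp)
    simpa [hνdef] using h
  have hνkey : ∀ n i, i < ms n → ν (L n + i) = n := by
    intro n i hi
    have hub : L n ≤ L n + i := Nat.le_add_right _ _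
    have hle : n ≤ L n + i := le_trans (hLle n) hub
    have h1 : n ≤ ν (L n + i) := by
      have h := Nat.le_findGreatest (P := fun p => L p ≤ L n + i) hle hub
      simpa [hνdef] using h
    have h2 : ν (L n + i) ≤ n := by
      by_contra hgt
      push_neg at hgt
      have hP : L (ν (L n + i)) ≤ L n + i := hν1 _
      have h3 : L (n+1) ≤ L (ν (L n + i)) := hLmono hgt
      rw [hLadd] at h3
      omega
    omega
  set z : ℕ → Z := fun j => ((2:ℝ)⁻¹)^(ν j) • xs (ν j) (j - L (ν j)) with hzdef
  have hz : ∀ n i, i < ms n → z (L n + i) = ((2:ℝ)⁻¹)^n • xs n i := by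
    intro n i hi
    rw [hzdef]
    simp only [hνkey n i hi, Nat.add_sub_cancel_left]
  have hblock : ∀ (f : ℕ → ℝ) (N : ℕ),
      ∑ j ∈ range (L N), f j = ∑ n ∈ range N, ∑ i ∈ range (ms n), f (L n + i) := by
    intro f N
    induction N with
    | zero => rw [hLdef]; simp
    | succ N ih =>
      rw [Finset.sum_range_succ, ← ih, hLadd, Finset.sum_range_add]
  have hquarter : ∀ n : ℕ, (((2:ℝ)⁻¹)^n)^2 = ((1:ℝ)/4)^n := by
    intro n
    rw [← pow_mul, mul_comm, pow_mul]
    norm_num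
  have hmem : MemWeakLp 2 z := by
    refine ⟨2, ?_⟩
    intro M
    apply weakNorm_two_le
    intro φ
    have hsum : ∑ j ∈ range M, (φ.1 (z j))^2 ≤ 4 := by
      have h1 : ∑ j ∈ range M, (φ.1 (z j))^2 ≤ ∑ j ∈ range (L M), (φ.1 (z j))^2 :=
        Finset.sum_le_sum_of_subset_of_nonneg (Finset.range_subset_range.2 (hLle M))
          (fun _ _ _ => sq_nonneg _)
      have h2 := hblock (fun j => (φ.1 (z j))^2) M
      have h3 : ∀ n ∈ range M, ∑ i ∈ range (ms n), (φ.1 (z (L n + i)))^2 ≤ ((1:ℝ)/4)^n := by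
        intro n _
        have e : ∀ i ∈ range (ms n), (φ.1 (z (L n + i)))^2 = ((1/4:ℝ))^n * (φ.1 (xs n i))^2 := by
          intro i hi
          rw [hz n i (Finset.mem_range.1 hi), _root_.map_smul, smul_eq_mul, mul_pow, hquarter]
        rw [Finset.sum_congr rfl e, ← Finset.mul_sum]
        calc ((1/4:ℝ))^n * ∑ i ∈ range (ms n), (φ.1 (xs n i))^2
            ≤ (1/4)^n * 1 := mul_le_mul_of_nonneg_left (hweak n φ) (by positivity)
          _ = (1/4)^n := mul_one _
      have h4 : Summable (fun n : ℕ => ((1:ℝ)/4)^n) := summable_geometric_of_lt_one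
        (by norm_num) (by norm_num)
      calc ∑ j ∈ range M, (φ.1 (z j))^2
          ≤ ∑ n ∈ range M, ((1:ℝ)/4)^n := by
            rw [h2] at h1; exact le_trans h1 (Finset.sum_le_sum h3)
        _ ≤ ∑' n : ℕ, ((1:ℝ)/4)^n := Summable.sum_le_tsum _ (fun n _ => by positivity) h4
        _ = (1 - 1/4)⁻¹ := tsum_geometric_of_lt_one (by norm_num) (by norm_num)
        _ ≤ 4 := by norm_num
    calc (∑ j ∈ range M, (φ.1 (z j))^2) ^ ((1:ℝ)/2)
        ≤ (4:ℝ) ^ ((1:ℝ)/2) :=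
          Real.rpow_le_rpow (Finset.sum_nonneg fun _ _ => sq_nonneg _) hsum (by norm_num)
      _ = 2 := four_rpow_half
  have hsummable := hq z hmem
  obtain ⟨N, hN⟩ := exists_nat_gt (∑' j, ‖v (z j)‖^(2:ℕ))
  have hNpos : 0 < N := by
    have h0 : (0:ℝ) ≤ ∑' j, ‖v (z j)‖^(2:ℕ) := tsum_nonneg (fun j => by positivity)
    by_contra h
    have : N = 0 := by omega
    rw [this] at hN
    push_cast at hN
    linarith
  have hlow : (N:ℝ) < ∑ j ∈ range (L N), ‖v (z j)‖^2 := by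
    rw [hblock (fun j => ‖v (z j)‖^2) N]
    have hterm : ∀ n ∈ range N, (1:ℝ) < ∑ i ∈ range (ms n), ‖v (z (L n + i))‖^2 := by
      intro n _
      have e : ∀ i ∈ range (ms n), ‖v (z (L n + i))‖^2 = ((1/4:ℝ))^n * ‖v (xs n i)‖^2 := by
        intro i hi
        rw [hz n i (Finset.mem_range.1 hi), _root_.map_smul, norm_smul, mul_pow]
        congr 1
        rw [Real.norm_eq_abs, abs_pow, abs_inv]
        rw [show |(2:ℝ)| = 2 by norm_num]
        rw [← hquarter]
      rw [Finset.sum_congr rfl e, ← Finset.mul_sum]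
      calc (1:ℝ) = (1/4)^n * 4^n := by rw [← mul_pow]; norm_num
        _ < (1/4)^n * ∑ i ∈ range (ms n), ‖v (xs n i)‖^2 := by
            apply mul_lt_mul_of_pos_left (hbig n) (by positivity)
    calc (N:ℝ) = ∑ _n ∈ range N, (1:ℝ) := by simp
      _ < ∑ n ∈ range N, ∑ i ∈ range (ms n), ‖v (z (L n + i))‖^2 := by
          apply Finset.sum_lt_sum_of_nonempty (Finset.nonempty_range_iff.2 (by omega)) hterm
  have hup : ∑ j ∈ range (L N), ‖v (z j)‖^2 ≤ ∑' j, ‖v (z j)‖^(2:ℕ) :=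
    Summable.sum_le_tsum _ (fun i _ => by positivity) hsummable
  linarith

lemma summing_const {W : Type v} [NormedAddCommGroup W] [NormedSpace ℝ W]
    (v : Z →L[ℝ] W)
    (hq : ∀ x : ℕ → Z, MemWeakLp 2 x → Summable fun i => ‖v (x i)‖^(2:ℕ)) :
    ∃ C, 0 ≤ C ∧ ∀ (m : ℕ) (x : ℕ → Z) (B : ℝ), 0 < B →
      (∀ φ : {φ : Z →L[ℝ] ℝ // ‖φ‖ ≤ 1}, ∑ i ∈ range m, (φ.1 (x i))^2 ≤ B) →
      ∑ i ∈ range m, ‖v (x i)‖^2 ≤ C * B := by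
  obtain ⟨C, hC0, hC⟩ := summing_const_normalized v hq
  refine ⟨C, hC0, ?_⟩
  intro m x B hB hcond
  set c : ℝ := (Real.sqrt B)⁻¹ with hcdef
  have hc0 : 0 < c := by rw [hcdef]; positivity
  have hcsq : c^2 = B⁻¹ := by
    rw [hcdef, inv_pow, Real.sq_sqrt (le_of_lt hB)]
  have happ : ∑ i ∈ range m, ‖v (c • x i)‖^2 ≤ C := by
    apply hC m
    intro φ
    have e : ∀ i ∈ range m, (φ.1 (c • x i))^2 = B⁻¹ * (φ.1 (x i))^2 := by
      intro i _
      rw [_root_.map_smul, smul_eq_mul, mul_pow, hcsq]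
    rw [Finset.sum_congr rfl e, ← Finset.mul_sum]
    calc B⁻¹ * ∑ i ∈ range m, (φ.1 (x i))^2 ≤ B⁻¹ * B :=
          mul_le_mul_of_nonneg_left (hcond φ) (by positivity)
      _ = 1 := inv_mul_cancel₀ (ne_of_gt hB)
  have e : ∀ i ∈ range m, ‖v (c • x i)‖^2 = B⁻¹ * ‖v (x i)‖^2 := by
    intro i _
    rw [_root_.map_smul, norm_smul, mul_pow, Real.norm_eq_abs, sq_abs, hcsq]
  rw [Finset.sum_congr rfl e, ← Finset.mul_sum] at happ
  calc ∑ i ∈ range m, ‖v (x i)‖^2 = B * (B⁻¹ * ∑ i ∈ range m, ‖v (x i)‖^2) := by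
        field_simp
    _ ≤ B * C := mul_le_mul_of_nonneg_left happ (le_of_lt hB)
    _ = C * B := mul_comm _ _

lemma sg_pairing (m : ℕ) (ψ : ℕ → (Z →L[ℝ] ℝ)) (x : ℕ → Z) :
    ∑ k ∈ range (2^m),
        (∑ i ∈ range m, sg m k i • ψ i) (∑ j ∈ range m, sg m k j • x j)
      = 2^m * ∑ i ∈ range m, ψ i (x i) := by
  have e : ∀ k ∈ range (2^m),
      (∑ i ∈ range m, sg m k i • ψ i) (∑ j ∈ range m, sg m k j • x j)
        = ∑ i ∈ range m, ∑ j ∈ range m, (sg m k i * sg m k j) * ψ i (x j) := by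
    intro k _
    rw [ContinuousLinearMap.sum_apply]
    apply Finset.sum_congr rfl
    intro i _
    rw [ContinuousLinearMap.smul_apply, map_sum, Finset.smul_sum]
    apply Finset.sum_congr rfl
    intro j _
    rw [_root_.map_smul]
    simp only [smul_eq_mul]
    ring
  rw [Finset.sum_congr rfl e, sg_quad]

end Aux2
set_option maxHeartbeats 2000000

/-- For `X` of type 2: `u` maps almost unconditionally summable sequences
into `ℓ_2⟨Y⟩` iff `u*` is 2-summing (equivalently, `u` is Cohen strongly 2-summing). -/
theorem stmt4 {X : Type u} {Y : Type v} [NormedAddCommGroup X] [NormedSpace ℝ X]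
    [CompleteSpace X] [NormedAddCommGroup Y] [NormedSpace ℝ Y] [CompleteSpace Y]
    (hX : HasTypeP 2 X) (u : X →L[ℝ] Y) :
    (∀ x : ℕ → X, MemRad x → MemCohen 2 (fun i => u (x i))) ↔ IsPSumming 2 (adj u) := by
  constructor
  · -- forward direction
    intro h
    rw [isPSumming_two_iff]
    intro φ hφ
    by_contra hns
    set ψ : ℕ → (X →L[ℝ] ℝ) := fun i => adj u (φ i) with hψdef
    set b : ℕ → ℝ := fun i => ‖ψ i‖^2 with hbdef
    have hb : ∀ i, 0 ≤ b i := fun i => sq_nonneg _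
    have hns' : ¬ Summable b := hns
    have hsum2 := abel_dini_summable hb hns'
    have hdiv := abel_dini_not_summable hb hns'
    set a : ℕ → ℝ := fun i => ‖ψ i‖ / TT b i with hadef
    have ha0 : ∀ i, 0 ≤ a i := fun i => div_nonneg (norm_nonneg _) (le_of_lt (TT_pos b i))
    choose e he1 he2 using fun i => dual_half (ψ i)
    set x : ℕ → X := fun i => a i • e i with hxdef
    have hasq : ∀ i, (a i)^2 = b i / (TT b i)^2 := by
      intro i
      rw [hadef, hbdef]
      simp only
      rw [div_pow]
    have hsa : Summable (fun i => (a i)^2) := by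
      have : (fun i => (a i)^2) = fun i => b i / (TT b i)^2 := funext hasq
      rw [this]
      exact hsum2
    have hxmem : MemRad x := by
      obtain ⟨Ct, hCt0, hCt⟩ := hX
      refine ⟨Ct * (∑' i, (a i)^2) ^ ((1:ℝ)/2), ?_⟩
      intro m
      calc radNorm m x ≤ Ct * lpNormFin 2 m x := hCt m x
        _ ≤ Ct * (∑' i, (a i)^2) ^ ((1:ℝ)/2) := by
            apply mul_le_mul_of_nonneg_left _ hCt0
            rw [lpNormFin_two]
            apply Real.rpow_le_rpow (Finset.sum_nonneg fun i _ => sq_nonneg _) ?_ (by norm_num)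
            have hterm : ∀ i ∈ range m, ‖x i‖^2 ≤ (a i)^2 := by
              intro i _
              rw [hxdef]
              simp only
              rw [norm_smul, mul_pow, Real.norm_eq_abs, sq_abs]
              calc (a i)^2 * ‖e i‖^2 ≤ (a i)^2 * 1 := by
                    apply mul_le_mul_of_nonneg_left _ (sq_nonneg _)
                    calc ‖e i‖^2 ≤ 1^2 := pow_le_pow_left₀ (norm_nonneg _) (he1 i) 2
                      _ = 1 := one_pow 2
                _ = (a i)^2 := mul_one _
            calc ∑ i ∈ range m, ‖x i‖^2 ≤ ∑ i ∈ range m, (a i)^2 :=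
                  Finset.sum_le_sum hterm
              _ ≤ ∑' i, (a i)^2 := Summable.sum_le_tsum _ (fun i _ => sq_nonneg _) hsa
    have hφ2 : MemWeakLp (conjExp 2) φ := by rw [conjExp_two]; exact hφ
    have hcoh := h x hxmem φ hφ2
    apply hdiv
    apply Summable.of_nonneg_of_le
      (fun i => div_nonneg (hb i) (le_of_lt (TT_pos b i))) ?_ (hcoh.mul_left 2)
    intro i
    have h2 : ψ i (x i) = a i * ψ i (e i) := by
      rw [hxdef]
      simp only
      rw [_root_.map_smul, smul_eq_mul]
    have h3 : a i * (‖ψ i‖/2) ≤ a i * ψ i (e i) :=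
      mul_le_mul_of_nonneg_left (he2 i) (ha0 i)
    have h4 : a i * ‖ψ i‖ = b i / TT b i := by
      rw [hadef, hbdef]
      simp only
      rw [div_mul_eq_mul_div, ← sq]
    have heq : φ i (u (x i)) = ψ i (x i) := rfl
    calc b i / TT b i = a i * ‖ψ i‖ := h4.symm
      _ = 2 * (a i * (‖ψ i‖/2)) := by ring
      _ ≤ 2 * (a i * ψ i (e i)) := by linarith
      _ = 2 * (ψ i (x i)) := by rw [h2]
      _ ≤ 2 * |φ i (u (x i))| := by
          have h5 : ψ i (x i) ≤ |ψ i (x i)| := le_abs_self _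
          rw [heq]
          linarith
  · -- reverse direction
    intro hq x hx φ hφ'
    have hφ : MemWeakLp 2 φ := by rwa [conjExp_two] at hφ'
    obtain ⟨Cx, hCx⟩ := hx
    have hCx0 : 0 ≤ Cx := le_trans (radNorm_nonneg_s4 0 x) (hCx 0)
    obtain ⟨D, hD0, hDb⟩ := memWeak_sq_bound hφ
    have hq' := (isPSumming_two_iff (adj u)).1 hq
    obtain ⟨C, hC0, hCs⟩ := summing_const (adj u) hq'
    apply summable_of_sum_range_le (fun i => abs_nonneg _)
      (c := Real.sqrt (C * (D+1)) * Cx)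
    intro m
    set ε : ℕ → ℝ := fun i => if φ i (u (x i)) < 0 then (-1:ℝ) else 1 with hεdef
    have hε1 : ∀ i, ε i = 1 ∨ ε i = -1 := by
      intro i
      rw [hεdef]
      simp only
      split
      · right; rfl
      · left; rfl
    set φ' : ℕ → (Y →L[ℝ] ℝ) := fun i => ε i • φ i with hφ'def
    set ψ' : ℕ → (X →L[ℝ] ℝ) := fun i => adj u (φ' i) with hψ'def
    have habs : ∀ i, |φ i (u (x i))| = ψ' i (x i) := by
      intro i
      have h1 : ψ' i (x i) = ε i * (φ i (u (x i))) := by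
        rw [hψ'def, hφ'def]
        simp only
        rw [_root_.map_smul]
        rfl
      rw [h1, hεdef]
      simp only
      rcases lt_or_ge (φ i (u (x i))) 0 with hlt | hge
      · rw [if_pos hlt, abs_of_neg hlt]; ring
      · rw [if_neg (not_lt.2 hge), abs_of_nonneg hge]; ring
    rw [Finset.sum_congr rfl (fun i _ => habs i)]
    -- notation
    have hpm : (0:ℝ) < 2^m := by positivity
    set T : ℝ := ∑ i ∈ range m, ψ' i (x i) with hTdef
    set S : ℝ := ∑ k ∈ range (2^m),
      (∑ i ∈ range m, sg m k i • ψ' i) (∑ j ∈ range m, sg m k j • x j) with hSdef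
    have hpair : S = 2^m * T := sg_pairing m ψ' x
    have hT0 : 0 ≤ T := by
      rw [hTdef, ← Finset.sum_congr rfl (fun i _ => habs i)]
      exact Finset.sum_nonneg fun i _ => abs_nonneg _
    have hS0 : 0 ≤ S := by
      rw [hpair]; positivity
    -- Cauchy–Schwarz
    have hCS : S^2 ≤ (∑ k ∈ range (2^m), ‖∑ i ∈ range m, sg m k i • ψ' i‖^2)
        * (∑ k ∈ range (2^m), ‖∑ j ∈ range m, sg m k j • x j‖^2) := by
      have h1 : S ≤ ∑ k ∈ range (2^m),
          ‖∑ i ∈ range m, sg m k i • ψ' i‖ * ‖∑ j ∈ range m, sg m k j • x j‖ := by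
        rw [hSdef]
        apply Finset.sum_le_sum
        intro k _
        calc (∑ i ∈ range m, sg m k i • ψ' i) (∑ j ∈ range m, sg m k j • x j)
            ≤ ‖(∑ i ∈ range m, sg m k i • ψ' i) (∑ j ∈ range m, sg m k j • x j)‖ :=
              le_abs_self _
          _ ≤ ‖∑ i ∈ range m, sg m k i • ψ' i‖ * ‖∑ j ∈ range m, sg m k j • x j‖ :=
              ContinuousLinearMap.le_opNorm _ _
      have h2 : (∑ k ∈ range (2^m),
          ‖∑ i ∈ range m, sg m k i • ψ' i‖ * ‖∑ j ∈ range m, sg m k j • x j‖)^2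
          ≤ (∑ k ∈ range (2^m), ‖∑ i ∈ range m, sg m k i • ψ' i‖^2)
            * (∑ k ∈ range (2^m), ‖∑ j ∈ range m, sg m k j • x j‖^2) :=
        sum_mul_sq_le_sq_mul_sq _ _ _
      calc S^2 ≤ (∑ k ∈ range (2^m),
            ‖∑ i ∈ range m, sg m k i • ψ' i‖ * ‖∑ j ∈ range m, sg m k j • x j‖)^2 :=
            pow_le_pow_left₀ hS0 h1 2
        _ ≤ _ := h2
    -- bound on the Ψ part via 2-summing
    have hΨbound : ∑ k ∈ range (2^m), ‖∑ i ∈ range m, sg m k i • ψ' i‖^2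
        ≤ C * (2^m * (D+1)) := by
      have hadjsum : ∀ k, (∑ i ∈ range m, sg m k i • ψ' i)
          = adj u (∑ i ∈ range m, sg m k i • φ' i) := by
        intro k
        rw [map_sum]
        apply Finset.sum_congr rfl
        intro i _
        rw [hψ'def, _root_.map_smul]
      have hB : (0:ℝ) < 2^m * (D+1) := by positivity
      have hcond : ∀ θ : {θ : (Y →L[ℝ] ℝ) →L[ℝ] ℝ // ‖θ‖ ≤ 1},
          ∑ k ∈ range (2^m), (θ.1 ((fun k => ∑ i ∈ range m, sg m k i • φ' i) k))^2
            ≤ 2^m * (D+1) := by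
        intro θ
        have e : ∀ k ∈ range (2^m), (θ.1 (∑ i ∈ range m, sg m k i • φ' i))^2
            = (∑ i ∈ range m, sg m k i * (θ.1 (φ' i)))^2 := by
          intro k _
          congr 1
          rw [map_sum]
          apply Finset.sum_congr rfl
          intro i _
          rw [_root_.map_smul, smul_eq_mul]
        simp only
        rw [Finset.sum_congr rfl e, sg_sq_sum]
        have e2 : ∀ i ∈ range m, (θ.1 (φ' i))^2 = (θ.1 (φ i))^2 := by
          intro i _
          rw [hφ'def]
          simp only
          rw [_root_.map_smul, smul_eq_mul, mul_pow]
          rcases hε1 i with hh | hh <;> rw [hh] <;> ring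
        rw [Finset.sum_congr rfl e2]
        calc (2^m:ℝ) * ∑ i ∈ range m, (θ.1 (φ i))^2 ≤ 2^m * D :=
              mul_le_mul_of_nonneg_left (hDb m θ) (by positivity)
          _ ≤ 2^m * (D+1) := by nlinarith
      have happ := hCs (2^m) (fun k => ∑ i ∈ range m, sg m k i • φ' i)
        (2^m * (D+1)) hB hcond
      calc ∑ k ∈ range (2^m), ‖∑ i ∈ range m, sg m k i • ψ' i‖^2
          = ∑ k ∈ range (2^m), ‖adj u ((fun k => ∑ i ∈ range m, sg m k i • φ' i) k)‖^2 := by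
            apply Finset.sum_congr rfl
            intro k _
            rw [hadjsum k]
        _ ≤ C * (2^m*(D+1)) := happ
    -- bound on the X part via the Rad norm
    have hXbound : ∑ k ∈ range (2^m), ‖∑ j ∈ range m, sg m k j • x j‖^2
        ≤ 2^m * Cx^2 := by
      have h1 := radNorm_sq m x
      have h2 : (radNorm m x)^2 ≤ Cx^2 := pow_le_pow_left₀ (radNorm_nonneg_s4 m x) (hCx m) 2
      rw [h1] at h2
      calc ∑ k ∈ range (2^m), ‖∑ j ∈ range m, sg m k j • x j‖^2
          = 2^m * (((2:ℝ)^m)⁻¹ * ∑ k ∈ range (2^m), ‖∑ j ∈ range m, sg m k j • x j‖^2) := by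
            field_simp
        _ ≤ 2^m * Cx^2 := mul_le_mul_of_nonneg_left h2 (le_of_lt hpm)
    -- conclude
    have hTsq : T^2 ≤ (Real.sqrt (C * (D+1)) * Cx)^2 := by
      have hTS : T = ((2:ℝ)^m)⁻¹ * S := by
        rw [hpair]
        field_simp
      have hΨ0 : 0 ≤ ∑ k ∈ range (2^m), ‖∑ i ∈ range m, sg m k i • ψ' i‖^2 :=
        Finset.sum_nonneg fun k _ => sq_nonneg _
      have hX0 : 0 ≤ ∑ k ∈ range (2^m), ‖∑ j ∈ range m, sg m k j • x j‖^2 :=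
        Finset.sum_nonneg fun k _ => sq_nonneg _
      have hprod : (∑ k ∈ range (2^m), ‖∑ i ∈ range m, sg m k i • ψ' i‖^2)
          * (∑ k ∈ range (2^m), ‖∑ j ∈ range m, sg m k j • x j‖^2)
          ≤ (C * (2^m * (D+1))) * (2^m * Cx^2) := by
        apply mul_le_mul hΨbound hXbound hX0
        positivity
      have hsq1 : T^2 = (((2:ℝ)^m)⁻¹)^2 * S^2 := by
        rw [hTS, mul_pow]
      have hBd2 : (Real.sqrt (C * (D+1)) * Cx)^2 = C * (D+1) * Cx^2 := by
        rw [mul_pow, Real.sq_sqrt (by positivity)]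
      rw [hsq1, hBd2]
      have hfin : (((2:ℝ)^m)⁻¹)^2 * ((C * (2^m * (D+1))) * (2^m * Cx^2))
          = C * (D+1) * Cx^2 := by
        field_simp
      calc (((2:ℝ)^m)⁻¹)^2 * S^2
          ≤ (((2:ℝ)^m)⁻¹)^2 * ((C * (2^m * (D+1))) * (2^m * Cx^2)) := by
            apply mul_le_mul_of_nonneg_left (le_trans hCS hprod) (sq_nonneg _)
        _ = C * (D+1) * Cx^2 := hfin
    have hBd0 : 0 ≤ Real.sqrt (C * (D+1)) * Cx := by positivity
    calc T = Real.sqrt (T^2) := (Real.sqrt_sq hT0).symm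
      _ ≤ Real.sqrt ((Real.sqrt (C * (D+1)) * Cx)^2) := Real.sqrt_le_sqrt hTsq
      _ = Real.sqrt (C * (D+1)) * Cx := Real.sqrt_sq hBd0

end
end
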